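/- arXiv:1606.01409 — 7 statements merged into one kernel-verified Lean document; each statement's English description precedes it below -/
import Mathlib

section
/- Let M be a (not necessarily associative) algebra over ℚ with bilinear multiplication ⋆. Then ⋆ is alternative if and only if for all f,g,h ∈ M the associator equals one sixth of the jacobiator: A(f,g,h) = (1/6)·[f,g,h]. -/
/-- For a (not necessarily associative) algebra over ℚ with bilinear
multiplication `mul`, the multiplication is alternative iff the associator equals
one sixth of the jacobiator. -/
theorem alternative_iff_associator_eq_sixth_jacobiator {M : Type*} [AddCommGroup M] [Module ℚ M]
    (mul : M →ₗ[ℚ] M →ₗ[ℚ] M)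
    (A : M → M → M → M)
    (hA : ∀ f g h : M, A f g h = mul f (mul g h) - mul (mul f g) h)
    (br : M → M → M)
    (hbr : ∀ f g : M, br f g = mul f g - mul g f)
    (J : M → M → M → M)
    (hJ : ∀ f g h : M, J f g h = br f (br g h) + br h (br f g) + br g (br h f)) :
    ((∀ f g : M, mul f (mul f g) = mul (mul f f) g) ∧
     (∀ f g : M, mul f (mul g g) = mul (mul f g) g)) ↔
    (∀ f g h : M, A f g h = (6 : ℚ)⁻¹ • J f g h) := by
  have key : ∀ f g h : M, J f g h =
      A f g h + A g h f + A h f g - A g f h - A f h g - A h g f := by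
    intro f g h
    simp only [hJ, hbr, hA, map_sub, map_add, LinearMap.sub_apply, LinearMap.add_apply]
    abel
  constructor
  · rintro ⟨h1, h2⟩ f g h
    have hAzero1 : ∀ x y : M, A x x y = 0 := by
      intro x y; rw [hA, h1, sub_self]
    have hAzero2 : ∀ x y : M, A x y y = 0 := by
      intro x y; rw [hA, h2, sub_self]
    have anti1 : ∀ x y z : M, A y x z = - A x y z := by
      intro x y z
      have := hAzero1 (x + y) z
      simp only [hA, map_add, LinearMap.add_apply] at this ⊢
      have h1' := hAzero1 x z
      have h2' := hAzero1 y z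
      simp only [hA] at h1' h2'
      linear_combination (norm := abel) this - h1' - h2'
    have anti2 : ∀ x y z : M, A x z y = - A x y z := by
      intro x y z
      have := hAzero2 x (y + z)
      simp only [hA, map_add, LinearMap.add_apply] at this ⊢
      have h1' := hAzero2 x y
      have h2' := hAzero2 x z
      simp only [hA] at h1' h2'
      linear_combination (norm := abel) this - h1' - h2'
    have e1 : A g h f = A f g h := by rw [anti2 g f h, anti1 f g h, neg_neg]
    have e2 : A h f g = A f g h := by rw [anti1 f h g, anti2 f g h, neg_neg]
    have e3 : A g f h = - A f g h := anti1 f g h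
    have e4 : A f h g = - A f g h := anti2 f g h
    have e5 : A h g f = - A f g h := by rw [anti1 g h f, e1]
    have hJ6 : J f g h = (6 : ℚ) • A f g h := by
      rw [key, e1, e2, e3, e4, e5]
      have : ((6 : ℚ) : ℚ) • A f g h = A f g h + A f g h + A f g h + A f g h
          + A f g h + A f g h := by
        rw [show (6 : ℚ) = ((6 : ℕ) : ℚ) by norm_num, Nat.cast_smul_eq_nsmul]
        abel
      rw [this]; abel
    rw [hJ6, smul_smul]
    norm_num
  · intro hAJ
    have Jz1 : ∀ x y : M, J x x y = 0 := by
      intro x y; rw [key]; abel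
    have Jz2 : ∀ x y : M, J x y y = 0 := by
      intro x y; rw [key]; abel
    constructor
    · intro f g
      have := hAJ f f g
      rw [Jz1, smul_zero, hA, sub_eq_zero] at this
      exact this
    · intro f g
      have := hAJ f g g
      rw [Jz2, smul_zero, hA, sub_eq_zero] at this
      exact this
end

section
/- Let M be a (not necessarily associative) algebra over ℚ whose bilinear multiplication ⋆ is alternative. Then the commutator satisfies the Malcev identity: for all h,f,g ∈ M, [h,f,[h,g]] = [[h,f,g],h], where [f,g,h] denotes the jacobiator of the commutator. -/
set_option maxHeartbeats 4000000 in
/-- For an alternative bilinear multiplication on a ℚ-algebra, the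
commutator satisfies the Malcev identity `[h,f,[h,g]] = [[h,f,g],h]`, where
`[·,·,·]` is the jacobiator of the commutator. -/
theorem alternative_commutator_malcev {M : Type*} [AddCommGroup M] [Module ℚ M]
    (mul : M →ₗ[ℚ] M →ₗ[ℚ] M)
    (altL : ∀ f g : M, mul f (mul f g) = mul (mul f f) g)
    (altR : ∀ f g : M, mul f (mul g g) = mul (mul f g) g)
    (br : M → M → M)
    (hbr : ∀ f g : M, br f g = mul f g - mul g f)
    (J : M → M → M → M)
    (hJ : ∀ f g h : M, J f g h = br f (br g h) + br h (br f g) + br g (br h f)) :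
    ∀ h f g : M, J h f (br h g) = br (J h f g) h := by
  intro h f g
  have altL' : ∀ a b c : M, mul a (mul b c) + mul b (mul a c)
      = mul (mul a b) c + mul (mul b a) c := by
    intro a b c
    have key : (mul a (mul b c) + mul b (mul a c)) - (mul (mul a b) c + mul (mul b a) c)
        = (mul (a + b) (mul (a + b) c) - mul (mul (a + b) (a + b)) c)
          - (mul a (mul a c) - mul (mul a a) c)
          - (mul b (mul b c) - mul (mul b b) c) := by
      simp only [map_add, LinearMap.add_apply]
      abel
    rw [sub_eq_zero.mpr (altL (a + b) c), sub_eq_zero.mpr (altL a c),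
      sub_eq_zero.mpr (altL b c)] at key
    simp only [sub_zero, sub_self] at key
    exact sub_eq_zero.mp key
  have altR' : ∀ a b c : M, mul a (mul b c) + mul a (mul c b)
      = mul (mul a b) c + mul (mul a c) b := by
    intro a b c
    have key : (mul a (mul b c) + mul a (mul c b)) - (mul (mul a b) c + mul (mul a c) b)
        = (mul a (mul (b + c) (b + c)) - mul (mul a (b + c)) (b + c))
          - (mul a (mul b b) - mul (mul a b) b)
          - (mul a (mul c c) - mul (mul a c) c) := by
      simp only [map_add, LinearMap.add_apply]
      abel
    rw [sub_eq_zero.mpr (altR a (b + c)), sub_eq_zero.mpr (altR a b),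
      sub_eq_zero.mpr (altR a c)] at key
    simp only [sub_zero, sub_self] at key
    exact sub_eq_zero.mp key
  rw [← sub_eq_zero]
  have key : J h f (br h g) - br (J h f g) h =
      (2 : ℚ) • ((mul h (mul h (mul f g)) + mul h (mul h (mul f g))) - (mul (mul h h) (mul f g) + mul (mul h h) (mul f g))) +
      ((-1 : ℚ)/2) • ((mul h (mul h (mul g f)) + mul h (mul h (mul g f))) - (mul (mul h h) (mul g f) + mul (mul h h) (mul g f))) +
      (5 : ℚ) • ((mul h (mul f (mul h g)) + mul f (mul h (mul h g))) - (mul (mul h f) (mul h g) + mul (mul f h) (mul h g))) +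
      (-2 : ℚ) • ((mul h (mul f (mul h g)) + mul h (mul (mul h g) f)) - (mul (mul h f) (mul h g) + mul (mul h (mul h g)) f)) +
      (6 : ℚ) • ((mul h (mul f (mul g h)) + mul f (mul h (mul g h))) - (mul (mul h f) (mul g h) + mul (mul f h) (mul g h))) +
      (-6 : ℚ) • ((mul h (mul f (mul g h)) + mul h (mul (mul g h) f)) - (mul (mul h f) (mul g h) + mul (mul h (mul g h)) f)) +
      (7 : ℚ) • ((mul h (mul g (mul h f)) + mul g (mul h (mul h f))) - (mul (mul h g) (mul h f) + mul (mul g h) (mul h f))) +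
      (-6 : ℚ) • ((mul h (mul g (mul h f)) + mul h (mul (mul h f) g)) - (mul (mul h g) (mul h f) + mul (mul h (mul h f)) g)) +
      (5 : ℚ) • ((mul h (mul g (mul f h)) + mul g (mul h (mul f h))) - (mul (mul h g) (mul f h) + mul (mul g h) (mul f h))) +
      (-6 : ℚ) • ((mul h (mul g (mul f h)) + mul h (mul (mul f h) g)) - (mul (mul h g) (mul f h) + mul (mul h (mul f h)) g)) +
      (-2 : ℚ) • ((mul f (mul h (mul h g)) + mul f (mul (mul h g) h)) - (mul (mul f h) (mul h g) + mul (mul f (mul h g)) h)) +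
      (7 : ℚ) • ((mul f (mul g (mul h h)) + mul g (mul f (mul h h))) - (mul (mul f g) (mul h h) + mul (mul g f) (mul h h))) +
      (-8 : ℚ) • ((mul f (mul g (mul h h)) + mul f (mul (mul h h) g)) - (mul (mul f g) (mul h h) + mul (mul f (mul h h)) g)) +
      (-6 : ℚ) • ((mul g (mul h (mul f h)) + mul g (mul (mul f h) h)) - (mul (mul g h) (mul f h) + mul (mul g (mul f h)) h)) +
      (-6 : ℚ) • ((mul g (mul f (mul h h)) + mul g (mul (mul h h) f)) - (mul (mul g f) (mul h h) + mul (mul g (mul h h)) f)) +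
      (2 : ℚ) • ((mul h (mul (mul h f) g) + mul (mul h f) (mul h g)) - (mul (mul h (mul h f)) g + mul (mul (mul h f) h) g)) +
      (2 : ℚ) • ((mul h (mul (mul h g) f) + mul (mul h g) (mul h f)) - (mul (mul h (mul h g)) f + mul (mul (mul h g) h) f)) +
      (4 : ℚ) • ((mul h (mul (mul f h) g) + mul (mul f h) (mul h g)) - (mul (mul h (mul f h)) g + mul (mul (mul f h) h) g)) +
      (-1 : ℚ) • ((mul h (mul (mul f g) h) + mul (mul f g) (mul h h)) - (mul (mul h (mul f g)) h + mul (mul (mul f g) h) h)) +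
      (6 : ℚ) • ((mul h (mul (mul g h) f) + mul (mul g h) (mul h f)) - (mul (mul h (mul g h)) f + mul (mul (mul g h) h) f)) +
      (1 : ℚ) • ((mul h (mul (mul g f) h) + mul (mul g f) (mul h h)) - (mul (mul h (mul g f)) h + mul (mul (mul g f) h) h)) +
      (4 : ℚ) • ((mul f (mul (mul h h) g) + mul (mul h h) (mul f g)) - (mul (mul f (mul h h)) g + mul (mul (mul h h) f) g)) +
      (-2 : ℚ) • ((mul f (mul (mul h g) h) + mul (mul h g) (mul f h)) - (mul (mul f (mul h g)) h + mul (mul (mul h g) f) h)) +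
      (-1 : ℚ) • ((mul g (mul (mul h h) f) + mul (mul h h) (mul g f)) - (mul (mul g (mul h h)) f + mul (mul (mul h h) g) f)) +
      (1 : ℚ) • ((mul g (mul (mul h f) h) + mul (mul h f) (mul g h)) - (mul (mul g (mul h f)) h + mul (mul (mul h f) g) h)) +
      (5 : ℚ) • ((mul g (mul (mul f h) h) + mul (mul f h) (mul g h)) - (mul (mul g (mul f h)) h + mul (mul (mul f h) g) h)) +
      ((-9 : ℚ)/2) • (mul g (mul h (mul h f) + mul h (mul h f)) - mul g (mul (mul h h) f + mul (mul h h) f)) +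
      (-3 : ℚ) • (mul (mul h (mul h f) + mul h (mul h f)) g - mul (mul (mul h h) f + mul (mul h h) f) g) +
      (2 : ℚ) • (mul g (mul h (mul h f) + mul h (mul f h)) - mul g (mul (mul h h) f + mul (mul h f) h)) +
      (2 : ℚ) • (mul (mul h (mul h f) + mul h (mul f h)) g - mul (mul (mul h h) f + mul (mul h f) h) g) +
      (1 : ℚ) • (mul f (mul h (mul h g) + mul h (mul h g)) - mul f (mul (mul h h) g + mul (mul h h) g)) +
      ((-5 : ℚ)/2) • (mul (mul h (mul h g) + mul h (mul h g)) f - mul (mul (mul h h) g + mul (mul h h) g) f) +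
      (-6 : ℚ) • (mul f (mul h (mul h g) + mul h (mul g h)) - mul f (mul (mul h h) g + mul (mul h g) h)) +
      (6 : ℚ) • (mul (mul h (mul h g) + mul h (mul g h)) f - mul (mul (mul h h) g + mul (mul h g) h) f) +
      (-1 : ℚ) • (mul g (mul h (mul f h) + mul f (mul h h)) - mul g (mul (mul h f) h + mul (mul f h) h)) +
      (-4 : ℚ) • (mul (mul h (mul f h) + mul f (mul h h)) g - mul (mul (mul h f) h + mul (mul f h) h) g) +
      (-3 : ℚ) • (mul h (mul h (mul f g) + mul f (mul h g)) - mul h (mul (mul h f) g + mul (mul f h) g)) +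
      (-4 : ℚ) • (mul (mul h (mul f g) + mul f (mul h g)) h - mul (mul (mul h f) g + mul (mul f h) g) h) +
      (2 : ℚ) • (mul (mul h (mul f g) + mul h (mul g f)) h - mul (mul (mul h f) g + mul (mul h g) f) h) +
      (1 : ℚ) • (mul f (mul h (mul g h) + mul g (mul h h)) - mul f (mul (mul h g) h + mul (mul g h) h)) +
      (-7 : ℚ) • (mul (mul h (mul g h) + mul g (mul h h)) f - mul (mul (mul h g) h + mul (mul g h) h) f) := by
    simp only [hJ, hbr, map_add, map_sub, LinearMap.add_apply, LinearMap.sub_apply]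
    module
  rw [key]
  rw [sub_eq_zero.mpr (altL' h h (mul f g))]
  rw [sub_eq_zero.mpr (altL' h h (mul g f))]
  rw [sub_eq_zero.mpr (altL' h f (mul h g))]
  rw [sub_eq_zero.mpr (altR' h f (mul h g))]
  rw [sub_eq_zero.mpr (altL' h f (mul g h))]
  rw [sub_eq_zero.mpr (altR' h f (mul g h))]
  rw [sub_eq_zero.mpr (altL' h g (mul h f))]
  rw [sub_eq_zero.mpr (altR' h g (mul h f))]
  rw [sub_eq_zero.mpr (altL' h g (mul f h))]
  rw [sub_eq_zero.mpr (altR' h g (mul f h))]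
  rw [sub_eq_zero.mpr (altR' f h (mul h g))]
  rw [sub_eq_zero.mpr (altL' f g (mul h h))]
  rw [sub_eq_zero.mpr (altR' f g (mul h h))]
  rw [sub_eq_zero.mpr (altR' g h (mul f h))]
  rw [sub_eq_zero.mpr (altR' g f (mul h h))]
  rw [sub_eq_zero.mpr (altL' h (mul h f) g)]
  rw [sub_eq_zero.mpr (altL' h (mul h g) f)]
  rw [sub_eq_zero.mpr (altL' h (mul f h) g)]
  rw [sub_eq_zero.mpr (altL' h (mul f g) h)]
  rw [sub_eq_zero.mpr (altL' h (mul g h) f)]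
  rw [sub_eq_zero.mpr (altL' h (mul g f) h)]
  rw [sub_eq_zero.mpr (altL' f (mul h h) g)]
  rw [sub_eq_zero.mpr (altL' f (mul h g) h)]
  rw [sub_eq_zero.mpr (altL' g (mul h h) f)]
  rw [sub_eq_zero.mpr (altL' g (mul h f) h)]
  rw [sub_eq_zero.mpr (altL' g (mul f h) h)]
  rw [sub_eq_zero.mpr (by rw [altL' h h f])]
  rw [sub_eq_zero.mpr (by rw [altL' h h f])]
  rw [sub_eq_zero.mpr (by rw [altR' h h f])]
  rw [sub_eq_zero.mpr (by rw [altR' h h f])]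
  rw [sub_eq_zero.mpr (by rw [altL' h h g])]
  rw [sub_eq_zero.mpr (by rw [altL' h h g])]
  rw [sub_eq_zero.mpr (by rw [altR' h h g])]
  rw [sub_eq_zero.mpr (by rw [altR' h h g])]
  rw [sub_eq_zero.mpr (by rw [altL' h f h])]
  rw [sub_eq_zero.mpr (by rw [altL' h f h])]
  rw [sub_eq_zero.mpr (by rw [altL' h f g])]
  rw [sub_eq_zero.mpr (by rw [altL' h f g])]
  rw [sub_eq_zero.mpr (by rw [altR' h f g])]
  rw [sub_eq_zero.mpr (by rw [altL' h g h])]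
  rw [sub_eq_zero.mpr (by rw [altL' h g h])]
  simp
end

section
/- Let L be a module over a commutative ring equipped with a Malcev bracket [·,·], and let H,f,g ∈ L satisfy [f,H] = 0 and [g,H] = 0. Then the jacobiator J(H,f,g) commutes with H: [H, J(H,f,g)] = 0. -/
/-- For a Malcev bracket on a module, if `[f,H] = 0` and `[g,H] = 0`,
then the jacobiator `J(H,f,g)` commutes with `H`. -/
theorem malcev_jacobiator_is_integral_of_motion {R L : Type*} [CommRing R]
    [AddCommGroup L] [Module R L]
    (br : L →ₗ[R] L →ₗ[R] L)
    (hanti : ∀ x y : L, br x y = -br y x)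
    (J : L → L → L → L)
    (hJ : ∀ f g h : L, J f g h = br f (br g h) + br h (br f g) + br g (br h f))
    (hmalcev : ∀ h f g : L, J h f (br h g) = br (J h f g) h)
    (H f g : L) (hf : br f H = 0) (hg : br g H = 0) :
    br H (J H f g) = 0 := by
  have hHg : br H g = 0 := by rw [hanti, hg, neg_zero]
  have h1 := hmalcev H f g
  rw [hHg, hJ, map_zero] at h1
  simp only [map_zero, LinearMap.zero_apply, add_zero, zero_add] at h1
  rw [hanti H (J H f g), ← h1, neg_zero]
end

section
/- Let L be a module over a commutative ring R equipped with a Malcev bracket [·,·], and let H,f,g ∈ L satisfy [f,H] = 0 and [g,H] = 0. Then for every scalar t ∈ R the modified bracket {f,g}_H := [f,g] − t·J(H,f,g) satisfies the conservation identity −J(H,f,g) + [H, [f,g] − t·J(H,f,g)] = 0; equivalently, [H,[f,g]] = J(H,f,g) and [H,J(H,f,g)] = 0. -/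
/-- For a Malcev bracket, if `[f,H] = 0` and `[g,H] = 0`, then for
every scalar `t` the modified bracket `{f,g}_H = [f,g] - t • J(H,f,g)` satisfies
the conservation identity; equivalently `[H,[f,g]] = J(H,f,g)` and
`[H,J(H,f,g)] = 0`. -/
theorem malcev_modified_bracket_conserved {R L : Type*} [CommRing R]
    [AddCommGroup L] [Module R L]
    (br : L →ₗ[R] L →ₗ[R] L)
    (hanti : ∀ x y : L, br x y = -br y x)
    (J : L → L → L → L)
    (hJ : ∀ f g h : L, J f g h = br f (br g h) + br h (br f g) + br g (br h f))
    (hmalcev : ∀ h f g : L, J h f (br h g) = br (J h f g) h)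
    (H f g : L) (hf : br f H = 0) (hg : br g H = 0) :
    (∀ t : R, -J H f g + br H (br f g - t • J H f g) = 0) ∧
    br H (br f g) = J H f g ∧ br H (J H f g) = 0 := by
  have hHf : br H f = 0 := by rw [hanti, hf, neg_zero]
  have hHg : br H g = 0 := by rw [hanti, hg, neg_zero]
  have h2 : br H (br f g) = J H f g := by
    simp [hJ, hHf, hg]
  have h3 : br H (J H f g) = 0 := by
    have := hmalcev H f g
    rw [hHg] at this
    have hz : J H f 0 = 0 := by
      simp [hJ]
    rw [hz] at this
    rw [hanti, ← this, neg_zero]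
  refine ⟨fun t => ?_, h2, h3⟩
  rw [map_sub, map_smul, h2, h3, smul_zero, sub_zero, neg_add_cancel]
end

section
/- For all p,q ∈ ℝ⁷ with |p| ≤ 1 and |q| ≤ 1, the vector star product satisfies 1 − |p⊛q|² = (√(1−|p|²)·√(1−|q|²) − p·q)². In particular |p⊛q| ≤ 1, so the vector star product maps the closed unit ball of ℝ⁷ to itself. -/
open Finset

/-- The 0-indexed positive triples of the 7-dimensional epsilon tensor,
corresponding to the 1-indexed triples (1,2,3), (1,4,5), (1,7,6), (2,4,6),
(2,5,7), (3,4,7), (3,6,5). -/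
def octTriples : List (Fin 7 × Fin 7 × Fin 7) :=
  [(0, 1, 2), (0, 3, 4), (0, 6, 5), (1, 3, 5), (1, 4, 6), (2, 3, 6), (2, 5, 4)]

/-- The totally antisymmetric tensor `ε` on triples of indices in `Fin 7`:
`+1` on the listed triples and their cyclic permutations, `-1` on the odd
permutations thereof, and `0` otherwise. -/
def eps (i j k : Fin 7) : ℝ :=
  if (i, j, k) ∈ octTriples ∨ (j, k, i) ∈ octTriples ∨ (k, i, j) ∈ octTriples then 1
  else if (j, i, k) ∈ octTriples ∨ (i, k, j) ∈ octTriples ∨ (k, j, i) ∈ octTriples then -1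
  else 0

/-- The Levi-Civita symbol in seven dimensions: the sign of the permutation
`(a 0, …, a 6)` of `(0, …, 6)`, and `0` if the indices are not distinct.
In particular `eps7 ![0,1,2,3,4,5,6] = 1`. -/
noncomputable def eps7 (a : Fin 7 → Fin 7) : ℝ :=
  if h : Function.Bijective a then ((Equiv.Perm.sign (Equiv.ofBijective a h) : ℤ) : ℝ) else 0

/-- The rank-four tensor `ε4_{ijlm} = (1/6) Σ_{k,p,r} ε7_{ijlmkpr} ε_{kpr}`. -/
noncomputable def eps4 (i j l m : Fin 7) : ℝ :=
  (1 / 6) * ∑ k : Fin 7, ∑ p : Fin 7, ∑ r : Fin 7, eps7 ![i, j, l, m, k, p, r] * eps k p r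

/-- The Euclidean dot product on `ℝ⁷`. -/
def dot (u v : Fin 7 → ℝ) : ℝ := ∑ i : Fin 7, u i * v i

/-- The 7-dimensional cross product, `(u × v)_i = Σ_{j,k} ε_{ijk} u_j v_k`. -/
noncomputable def cross (u v : Fin 7 → ℝ) : Fin 7 → ℝ :=
  fun i => ∑ j : Fin 7, ∑ k : Fin 7, eps i j k * u j * v k

/-- `c(p,q) = √(1-|p|²)·√(1-|q|²) - p·q`. -/
noncomputable def cfun (p q : Fin 7 → ℝ) : ℝ :=
  Real.sqrt (1 - dot p p) * Real.sqrt (1 - dot q q) - dot p q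

/-- The sign `ε(p,q)`: `1` if `c(p,q) ≥ 0` and `-1` otherwise. -/
noncomputable def sgn (p q : Fin 7 → ℝ) : ℝ := if 0 ≤ cfun p q then 1 else -1

/-- The vector star product
`p ⊛ q = ε(p,q)·(√(1-|p|²) q + √(1-|q|²) p - p×q)`. -/
noncomputable def vstar (p q : Fin 7 → ℝ) : Fin 7 → ℝ :=
  sgn p q • (Real.sqrt (1 - dot p p) • q + Real.sqrt (1 - dot q q) • p - cross p q)

/-- Computable integer version of `eps`, for fast evaluation. -/
def epsZ (i j k : Fin 7) : ℤ :=
  if (i, j, k) ∈ octTriples ∨ (j, k, i) ∈ octTriples ∨ (k, i, j) ∈ octTriples then 1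
  else if (j, i, k) ∈ octTriples ∨ (i, k, j) ∈ octTriples ∨ (k, j, i) ∈ octTriples then -1
  else 0

lemma eps_eq (i j k : Fin 7) : eps i j k = (epsZ i j k : ℝ) := by
  unfold eps epsZ; split_ifs <;> norm_num

lemma eps_000 : eps (0:Fin 7) 0 0 = 0 := by rw [eps_eq]; norm_num [show epsZ 0 0 0 = 0 by decide]
lemma eps_001 : eps (0:Fin 7) 0 1 = 0 := by rw [eps_eq]; norm_num [show epsZ 0 0 1 = 0 by decide]
lemma eps_002 : eps (0:Fin 7) 0 2 = 0 := by rw [eps_eq]; norm_num [show epsZ 0 0 2 = 0 by decide]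
lemma eps_003 : eps (0:Fin 7) 0 3 = 0 := by rw [eps_eq]; norm_num [show epsZ 0 0 3 = 0 by decide]
lemma eps_004 : eps (0:Fin 7) 0 4 = 0 := by rw [eps_eq]; norm_num [show epsZ 0 0 4 = 0 by decide]
lemma eps_005 : eps (0:Fin 7) 0 5 = 0 := by rw [eps_eq]; norm_num [show epsZ 0 0 5 = 0 by decide]
lemma eps_006 : eps (0:Fin 7) 0 6 = 0 := by rw [eps_eq]; norm_num [show epsZ 0 0 6 = 0 by decide]
lemma eps_010 : eps (0:Fin 7) 1 0 = 0 := by rw [eps_eq]; norm_num [show epsZ 0 1 0 = 0 by decide]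
lemma eps_011 : eps (0:Fin 7) 1 1 = 0 := by rw [eps_eq]; norm_num [show epsZ 0 1 1 = 0 by decide]
lemma eps_012 : eps (0:Fin 7) 1 2 = 1 := by rw [eps_eq]; norm_num [show epsZ 0 1 2 = 1 by decide]
lemma eps_013 : eps (0:Fin 7) 1 3 = 0 := by rw [eps_eq]; norm_num [show epsZ 0 1 3 = 0 by decide]
lemma eps_014 : eps (0:Fin 7) 1 4 = 0 := by rw [eps_eq]; norm_num [show epsZ 0 1 4 = 0 by decide]
lemma eps_015 : eps (0:Fin 7) 1 5 = 0 := by rw [eps_eq]; norm_num [show epsZ 0 1 5 = 0 by decide]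
lemma eps_016 : eps (0:Fin 7) 1 6 = 0 := by rw [eps_eq]; norm_num [show epsZ 0 1 6 = 0 by decide]
lemma eps_020 : eps (0:Fin 7) 2 0 = 0 := by rw [eps_eq]; norm_num [show epsZ 0 2 0 = 0 by decide]
lemma eps_021 : eps (0:Fin 7) 2 1 = -1 := by rw [eps_eq]; norm_num [show epsZ 0 2 1 = -1 by decide]
lemma eps_022 : eps (0:Fin 7) 2 2 = 0 := by rw [eps_eq]; norm_num [show epsZ 0 2 2 = 0 by decide]
lemma eps_023 : eps (0:Fin 7) 2 3 = 0 := by rw [eps_eq]; norm_num [show epsZ 0 2 3 = 0 by decide]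
lemma eps_024 : eps (0:Fin 7) 2 4 = 0 := by rw [eps_eq]; norm_num [show epsZ 0 2 4 = 0 by decide]
lemma eps_025 : eps (0:Fin 7) 2 5 = 0 := by rw [eps_eq]; norm_num [show epsZ 0 2 5 = 0 by decide]
lemma eps_026 : eps (0:Fin 7) 2 6 = 0 := by rw [eps_eq]; norm_num [show epsZ 0 2 6 = 0 by decide]
lemma eps_030 : eps (0:Fin 7) 3 0 = 0 := by rw [eps_eq]; norm_num [show epsZ 0 3 0 = 0 by decide]
lemma eps_031 : eps (0:Fin 7) 3 1 = 0 := by rw [eps_eq]; norm_num [show epsZ 0 3 1 = 0 by decide]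
lemma eps_032 : eps (0:Fin 7) 3 2 = 0 := by rw [eps_eq]; norm_num [show epsZ 0 3 2 = 0 by decide]
lemma eps_033 : eps (0:Fin 7) 3 3 = 0 := by rw [eps_eq]; norm_num [show epsZ 0 3 3 = 0 by decide]
lemma eps_034 : eps (0:Fin 7) 3 4 = 1 := by rw [eps_eq]; norm_num [show epsZ 0 3 4 = 1 by decide]
lemma eps_035 : eps (0:Fin 7) 3 5 = 0 := by rw [eps_eq]; norm_num [show epsZ 0 3 5 = 0 by decide]
lemma eps_036 : eps (0:Fin 7) 3 6 = 0 := by rw [eps_eq]; norm_num [show epsZ 0 3 6 = 0 by decide]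
lemma eps_040 : eps (0:Fin 7) 4 0 = 0 := by rw [eps_eq]; norm_num [show epsZ 0 4 0 = 0 by decide]
lemma eps_041 : eps (0:Fin 7) 4 1 = 0 := by rw [eps_eq]; norm_num [show epsZ 0 4 1 = 0 by decide]
lemma eps_042 : eps (0:Fin 7) 4 2 = 0 := by rw [eps_eq]; norm_num [show epsZ 0 4 2 = 0 by decide]
lemma eps_043 : eps (0:Fin 7) 4 3 = -1 := by rw [eps_eq]; norm_num [show epsZ 0 4 3 = -1 by decide]
lemma eps_044 : eps (0:Fin 7) 4 4 = 0 := by rw [eps_eq]; norm_num [show epsZ 0 4 4 = 0 by decide]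
lemma eps_045 : eps (0:Fin 7) 4 5 = 0 := by rw [eps_eq]; norm_num [show epsZ 0 4 5 = 0 by decide]
lemma eps_046 : eps (0:Fin 7) 4 6 = 0 := by rw [eps_eq]; norm_num [show epsZ 0 4 6 = 0 by decide]
lemma eps_050 : eps (0:Fin 7) 5 0 = 0 := by rw [eps_eq]; norm_num [show epsZ 0 5 0 = 0 by decide]
lemma eps_051 : eps (0:Fin 7) 5 1 = 0 := by rw [eps_eq]; norm_num [show epsZ 0 5 1 = 0 by decide]
lemma eps_052 : eps (0:Fin 7) 5 2 = 0 := by rw [eps_eq]; norm_num [show epsZ 0 5 2 = 0 by decide]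
lemma eps_053 : eps (0:Fin 7) 5 3 = 0 := by rw [eps_eq]; norm_num [show epsZ 0 5 3 = 0 by decide]
lemma eps_054 : eps (0:Fin 7) 5 4 = 0 := by rw [eps_eq]; norm_num [show epsZ 0 5 4 = 0 by decide]
lemma eps_055 : eps (0:Fin 7) 5 5 = 0 := by rw [eps_eq]; norm_num [show epsZ 0 5 5 = 0 by decide]
lemma eps_056 : eps (0:Fin 7) 5 6 = -1 := by rw [eps_eq]; norm_num [show epsZ 0 5 6 = -1 by decide]
lemma eps_060 : eps (0:Fin 7) 6 0 = 0 := by rw [eps_eq]; norm_num [show epsZ 0 6 0 = 0 by decide]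
lemma eps_061 : eps (0:Fin 7) 6 1 = 0 := by rw [eps_eq]; norm_num [show epsZ 0 6 1 = 0 by decide]
lemma eps_062 : eps (0:Fin 7) 6 2 = 0 := by rw [eps_eq]; norm_num [show epsZ 0 6 2 = 0 by decide]
lemma eps_063 : eps (0:Fin 7) 6 3 = 0 := by rw [eps_eq]; norm_num [show epsZ 0 6 3 = 0 by decide]
lemma eps_064 : eps (0:Fin 7) 6 4 = 0 := by rw [eps_eq]; norm_num [show epsZ 0 6 4 = 0 by decide]
lemma eps_065 : eps (0:Fin 7) 6 5 = 1 := by rw [eps_eq]; norm_num [show epsZ 0 6 5 = 1 by decide]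
lemma eps_066 : eps (0:Fin 7) 6 6 = 0 := by rw [eps_eq]; norm_num [show epsZ 0 6 6 = 0 by decide]
lemma eps_100 : eps (1:Fin 7) 0 0 = 0 := by rw [eps_eq]; norm_num [show epsZ 1 0 0 = 0 by decide]
lemma eps_101 : eps (1:Fin 7) 0 1 = 0 := by rw [eps_eq]; norm_num [show epsZ 1 0 1 = 0 by decide]
lemma eps_102 : eps (1:Fin 7) 0 2 = -1 := by rw [eps_eq]; norm_num [show epsZ 1 0 2 = -1 by decide]
lemma eps_103 : eps (1:Fin 7) 0 3 = 0 := by rw [eps_eq]; norm_num [show epsZ 1 0 3 = 0 by decide]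
lemma eps_104 : eps (1:Fin 7) 0 4 = 0 := by rw [eps_eq]; norm_num [show epsZ 1 0 4 = 0 by decide]
lemma eps_105 : eps (1:Fin 7) 0 5 = 0 := by rw [eps_eq]; norm_num [show epsZ 1 0 5 = 0 by decide]
lemma eps_106 : eps (1:Fin 7) 0 6 = 0 := by rw [eps_eq]; norm_num [show epsZ 1 0 6 = 0 by decide]
lemma eps_110 : eps (1:Fin 7) 1 0 = 0 := by rw [eps_eq]; norm_num [show epsZ 1 1 0 = 0 by decide]
lemma eps_111 : eps (1:Fin 7) 1 1 = 0 := by rw [eps_eq]; norm_num [show epsZ 1 1 1 = 0 by decide]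
lemma eps_112 : eps (1:Fin 7) 1 2 = 0 := by rw [eps_eq]; norm_num [show epsZ 1 1 2 = 0 by decide]
lemma eps_113 : eps (1:Fin 7) 1 3 = 0 := by rw [eps_eq]; norm_num [show epsZ 1 1 3 = 0 by decide]
lemma eps_114 : eps (1:Fin 7) 1 4 = 0 := by rw [eps_eq]; norm_num [show epsZ 1 1 4 = 0 by decide]
lemma eps_115 : eps (1:Fin 7) 1 5 = 0 := by rw [eps_eq]; norm_num [show epsZ 1 1 5 = 0 by decide]
lemma eps_116 : eps (1:Fin 7) 1 6 = 0 := by rw [eps_eq]; norm_num [show epsZ 1 1 6 = 0 by decide]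
lemma eps_120 : eps (1:Fin 7) 2 0 = 1 := by rw [eps_eq]; norm_num [show epsZ 1 2 0 = 1 by decide]
lemma eps_121 : eps (1:Fin 7) 2 1 = 0 := by rw [eps_eq]; norm_num [show epsZ 1 2 1 = 0 by decide]
lemma eps_122 : eps (1:Fin 7) 2 2 = 0 := by rw [eps_eq]; norm_num [show epsZ 1 2 2 = 0 by decide]
lemma eps_123 : eps (1:Fin 7) 2 3 = 0 := by rw [eps_eq]; norm_num [show epsZ 1 2 3 = 0 by decide]
lemma eps_124 : eps (1:Fin 7) 2 4 = 0 := by rw [eps_eq]; norm_num [show epsZ 1 2 4 = 0 by decide]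
lemma eps_125 : eps (1:Fin 7) 2 5 = 0 := by rw [eps_eq]; norm_num [show epsZ 1 2 5 = 0 by decide]
lemma eps_126 : eps (1:Fin 7) 2 6 = 0 := by rw [eps_eq]; norm_num [show epsZ 1 2 6 = 0 by decide]
lemma eps_130 : eps (1:Fin 7) 3 0 = 0 := by rw [eps_eq]; norm_num [show epsZ 1 3 0 = 0 by decide]
lemma eps_131 : eps (1:Fin 7) 3 1 = 0 := by rw [eps_eq]; norm_num [show epsZ 1 3 1 = 0 by decide]
lemma eps_132 : eps (1:Fin 7) 3 2 = 0 := by rw [eps_eq]; norm_num [show epsZ 1 3 2 = 0 by decide]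
lemma eps_133 : eps (1:Fin 7) 3 3 = 0 := by rw [eps_eq]; norm_num [show epsZ 1 3 3 = 0 by decide]
lemma eps_134 : eps (1:Fin 7) 3 4 = 0 := by rw [eps_eq]; norm_num [show epsZ 1 3 4 = 0 by decide]
lemma eps_135 : eps (1:Fin 7) 3 5 = 1 := by rw [eps_eq]; norm_num [show epsZ 1 3 5 = 1 by decide]
lemma eps_136 : eps (1:Fin 7) 3 6 = 0 := by rw [eps_eq]; norm_num [show epsZ 1 3 6 = 0 by decide]
lemma eps_140 : eps (1:Fin 7) 4 0 = 0 := by rw [eps_eq]; norm_num [show epsZ 1 4 0 = 0 by decide]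
lemma eps_141 : eps (1:Fin 7) 4 1 = 0 := by rw [eps_eq]; norm_num [show epsZ 1 4 1 = 0 by decide]
lemma eps_142 : eps (1:Fin 7) 4 2 = 0 := by rw [eps_eq]; norm_num [show epsZ 1 4 2 = 0 by decide]
lemma eps_143 : eps (1:Fin 7) 4 3 = 0 := by rw [eps_eq]; norm_num [show epsZ 1 4 3 = 0 by decide]
lemma eps_144 : eps (1:Fin 7) 4 4 = 0 := by rw [eps_eq]; norm_num [show epsZ 1 4 4 = 0 by decide]
lemma eps_145 : eps (1:Fin 7) 4 5 = 0 := by rw [eps_eq]; norm_num [show epsZ 1 4 5 = 0 by decide]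
lemma eps_146 : eps (1:Fin 7) 4 6 = 1 := by rw [eps_eq]; norm_num [show epsZ 1 4 6 = 1 by decide]
lemma eps_150 : eps (1:Fin 7) 5 0 = 0 := by rw [eps_eq]; norm_num [show epsZ 1 5 0 = 0 by decide]
lemma eps_151 : eps (1:Fin 7) 5 1 = 0 := by rw [eps_eq]; norm_num [show epsZ 1 5 1 = 0 by decide]
lemma eps_152 : eps (1:Fin 7) 5 2 = 0 := by rw [eps_eq]; norm_num [show epsZ 1 5 2 = 0 by decide]
lemma eps_153 : eps (1:Fin 7) 5 3 = -1 := by rw [eps_eq]; norm_num [show epsZ 1 5 3 = -1 by decide]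
lemma eps_154 : eps (1:Fin 7) 5 4 = 0 := by rw [eps_eq]; norm_num [show epsZ 1 5 4 = 0 by decide]
lemma eps_155 : eps (1:Fin 7) 5 5 = 0 := by rw [eps_eq]; norm_num [show epsZ 1 5 5 = 0 by decide]
lemma eps_156 : eps (1:Fin 7) 5 6 = 0 := by rw [eps_eq]; norm_num [show epsZ 1 5 6 = 0 by decide]
lemma eps_160 : eps (1:Fin 7) 6 0 = 0 := by rw [eps_eq]; norm_num [show epsZ 1 6 0 = 0 by decide]
lemma eps_161 : eps (1:Fin 7) 6 1 = 0 := by rw [eps_eq]; norm_num [show epsZ 1 6 1 = 0 by decide]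
lemma eps_162 : eps (1:Fin 7) 6 2 = 0 := by rw [eps_eq]; norm_num [show epsZ 1 6 2 = 0 by decide]
lemma eps_163 : eps (1:Fin 7) 6 3 = 0 := by rw [eps_eq]; norm_num [show epsZ 1 6 3 = 0 by decide]
lemma eps_164 : eps (1:Fin 7) 6 4 = -1 := by rw [eps_eq]; norm_num [show epsZ 1 6 4 = -1 by decide]
lemma eps_165 : eps (1:Fin 7) 6 5 = 0 := by rw [eps_eq]; norm_num [show epsZ 1 6 5 = 0 by decide]
lemma eps_166 : eps (1:Fin 7) 6 6 = 0 := by rw [eps_eq]; norm_num [show epsZ 1 6 6 = 0 by decide]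
lemma eps_200 : eps (2:Fin 7) 0 0 = 0 := by rw [eps_eq]; norm_num [show epsZ 2 0 0 = 0 by decide]
lemma eps_201 : eps (2:Fin 7) 0 1 = 1 := by rw [eps_eq]; norm_num [show epsZ 2 0 1 = 1 by decide]
lemma eps_202 : eps (2:Fin 7) 0 2 = 0 := by rw [eps_eq]; norm_num [show epsZ 2 0 2 = 0 by decide]
lemma eps_203 : eps (2:Fin 7) 0 3 = 0 := by rw [eps_eq]; norm_num [show epsZ 2 0 3 = 0 by decide]
lemma eps_204 : eps (2:Fin 7) 0 4 = 0 := by rw [eps_eq]; norm_num [show epsZ 2 0 4 = 0 by decide]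
lemma eps_205 : eps (2:Fin 7) 0 5 = 0 := by rw [eps_eq]; norm_num [show epsZ 2 0 5 = 0 by decide]
lemma eps_206 : eps (2:Fin 7) 0 6 = 0 := by rw [eps_eq]; norm_num [show epsZ 2 0 6 = 0 by decide]
lemma eps_210 : eps (2:Fin 7) 1 0 = -1 := by rw [eps_eq]; norm_num [show epsZ 2 1 0 = -1 by decide]
lemma eps_211 : eps (2:Fin 7) 1 1 = 0 := by rw [eps_eq]; norm_num [show epsZ 2 1 1 = 0 by decide]
lemma eps_212 : eps (2:Fin 7) 1 2 = 0 := by rw [eps_eq]; norm_num [show epsZ 2 1 2 = 0 by decide]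
lemma eps_213 : eps (2:Fin 7) 1 3 = 0 := by rw [eps_eq]; norm_num [show epsZ 2 1 3 = 0 by decide]
lemma eps_214 : eps (2:Fin 7) 1 4 = 0 := by rw [eps_eq]; norm_num [show epsZ 2 1 4 = 0 by decide]
lemma eps_215 : eps (2:Fin 7) 1 5 = 0 := by rw [eps_eq]; norm_num [show epsZ 2 1 5 = 0 by decide]
lemma eps_216 : eps (2:Fin 7) 1 6 = 0 := by rw [eps_eq]; norm_num [show epsZ 2 1 6 = 0 by decide]
lemma eps_220 : eps (2:Fin 7) 2 0 = 0 := by rw [eps_eq]; norm_num [show epsZ 2 2 0 = 0 by decide]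
lemma eps_221 : eps (2:Fin 7) 2 1 = 0 := by rw [eps_eq]; norm_num [show epsZ 2 2 1 = 0 by decide]
lemma eps_222 : eps (2:Fin 7) 2 2 = 0 := by rw [eps_eq]; norm_num [show epsZ 2 2 2 = 0 by decide]
lemma eps_223 : eps (2:Fin 7) 2 3 = 0 := by rw [eps_eq]; norm_num [show epsZ 2 2 3 = 0 by decide]
lemma eps_224 : eps (2:Fin 7) 2 4 = 0 := by rw [eps_eq]; norm_num [show epsZ 2 2 4 = 0 by decide]
lemma eps_225 : eps (2:Fin 7) 2 5 = 0 := by rw [eps_eq]; norm_num [show epsZ 2 2 5 = 0 by decide]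
lemma eps_226 : eps (2:Fin 7) 2 6 = 0 := by rw [eps_eq]; norm_num [show epsZ 2 2 6 = 0 by decide]
lemma eps_230 : eps (2:Fin 7) 3 0 = 0 := by rw [eps_eq]; norm_num [show epsZ 2 3 0 = 0 by decide]
lemma eps_231 : eps (2:Fin 7) 3 1 = 0 := by rw [eps_eq]; norm_num [show epsZ 2 3 1 = 0 by decide]
lemma eps_232 : eps (2:Fin 7) 3 2 = 0 := by rw [eps_eq]; norm_num [show epsZ 2 3 2 = 0 by decide]
lemma eps_233 : eps (2:Fin 7) 3 3 = 0 := by rw [eps_eq]; norm_num [show epsZ 2 3 3 = 0 by decide]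
lemma eps_234 : eps (2:Fin 7) 3 4 = 0 := by rw [eps_eq]; norm_num [show epsZ 2 3 4 = 0 by decide]
lemma eps_235 : eps (2:Fin 7) 3 5 = 0 := by rw [eps_eq]; norm_num [show epsZ 2 3 5 = 0 by decide]
lemma eps_236 : eps (2:Fin 7) 3 6 = 1 := by rw [eps_eq]; norm_num [show epsZ 2 3 6 = 1 by decide]
lemma eps_240 : eps (2:Fin 7) 4 0 = 0 := by rw [eps_eq]; norm_num [show epsZ 2 4 0 = 0 by decide]
lemma eps_241 : eps (2:Fin 7) 4 1 = 0 := by rw [eps_eq]; norm_num [show epsZ 2 4 1 = 0 by decide]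
lemma eps_242 : eps (2:Fin 7) 4 2 = 0 := by rw [eps_eq]; norm_num [show epsZ 2 4 2 = 0 by decide]
lemma eps_243 : eps (2:Fin 7) 4 3 = 0 := by rw [eps_eq]; norm_num [show epsZ 2 4 3 = 0 by decide]
lemma eps_244 : eps (2:Fin 7) 4 4 = 0 := by rw [eps_eq]; norm_num [show epsZ 2 4 4 = 0 by decide]
lemma eps_245 : eps (2:Fin 7) 4 5 = -1 := by rw [eps_eq]; norm_num [show epsZ 2 4 5 = -1 by decide]
lemma eps_246 : eps (2:Fin 7) 4 6 = 0 := by rw [eps_eq]; norm_num [show epsZ 2 4 6 = 0 by decide]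
lemma eps_250 : eps (2:Fin 7) 5 0 = 0 := by rw [eps_eq]; norm_num [show epsZ 2 5 0 = 0 by decide]
lemma eps_251 : eps (2:Fin 7) 5 1 = 0 := by rw [eps_eq]; norm_num [show epsZ 2 5 1 = 0 by decide]
lemma eps_252 : eps (2:Fin 7) 5 2 = 0 := by rw [eps_eq]; norm_num [show epsZ 2 5 2 = 0 by decide]
lemma eps_253 : eps (2:Fin 7) 5 3 = 0 := by rw [eps_eq]; norm_num [show epsZ 2 5 3 = 0 by decide]
lemma eps_254 : eps (2:Fin 7) 5 4 = 1 := by rw [eps_eq]; norm_num [show epsZ 2 5 4 = 1 by decide]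
lemma eps_255 : eps (2:Fin 7) 5 5 = 0 := by rw [eps_eq]; norm_num [show epsZ 2 5 5 = 0 by decide]
lemma eps_256 : eps (2:Fin 7) 5 6 = 0 := by rw [eps_eq]; norm_num [show epsZ 2 5 6 = 0 by decide]
lemma eps_260 : eps (2:Fin 7) 6 0 = 0 := by rw [eps_eq]; norm_num [show epsZ 2 6 0 = 0 by decide]
lemma eps_261 : eps (2:Fin 7) 6 1 = 0 := by rw [eps_eq]; norm_num [show epsZ 2 6 1 = 0 by decide]
lemma eps_262 : eps (2:Fin 7) 6 2 = 0 := by rw [eps_eq]; norm_num [show epsZ 2 6 2 = 0 by decide]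
lemma eps_263 : eps (2:Fin 7) 6 3 = -1 := by rw [eps_eq]; norm_num [show epsZ 2 6 3 = -1 by decide]
lemma eps_264 : eps (2:Fin 7) 6 4 = 0 := by rw [eps_eq]; norm_num [show epsZ 2 6 4 = 0 by decide]
lemma eps_265 : eps (2:Fin 7) 6 5 = 0 := by rw [eps_eq]; norm_num [show epsZ 2 6 5 = 0 by decide]
lemma eps_266 : eps (2:Fin 7) 6 6 = 0 := by rw [eps_eq]; norm_num [show epsZ 2 6 6 = 0 by decide]
lemma eps_300 : eps (3:Fin 7) 0 0 = 0 := by rw [eps_eq]; norm_num [show epsZ 3 0 0 = 0 by decide]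
lemma eps_301 : eps (3:Fin 7) 0 1 = 0 := by rw [eps_eq]; norm_num [show epsZ 3 0 1 = 0 by decide]
lemma eps_302 : eps (3:Fin 7) 0 2 = 0 := by rw [eps_eq]; norm_num [show epsZ 3 0 2 = 0 by decide]
lemma eps_303 : eps (3:Fin 7) 0 3 = 0 := by rw [eps_eq]; norm_num [show epsZ 3 0 3 = 0 by decide]
lemma eps_304 : eps (3:Fin 7) 0 4 = -1 := by rw [eps_eq]; norm_num [show epsZ 3 0 4 = -1 by decide]
lemma eps_305 : eps (3:Fin 7) 0 5 = 0 := by rw [eps_eq]; norm_num [show epsZ 3 0 5 = 0 by decide]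
lemma eps_306 : eps (3:Fin 7) 0 6 = 0 := by rw [eps_eq]; norm_num [show epsZ 3 0 6 = 0 by decide]
lemma eps_310 : eps (3:Fin 7) 1 0 = 0 := by rw [eps_eq]; norm_num [show epsZ 3 1 0 = 0 by decide]
lemma eps_311 : eps (3:Fin 7) 1 1 = 0 := by rw [eps_eq]; norm_num [show epsZ 3 1 1 = 0 by decide]
lemma eps_312 : eps (3:Fin 7) 1 2 = 0 := by rw [eps_eq]; norm_num [show epsZ 3 1 2 = 0 by decide]
lemma eps_313 : eps (3:Fin 7) 1 3 = 0 := by rw [eps_eq]; norm_num [show epsZ 3 1 3 = 0 by decide]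
lemma eps_314 : eps (3:Fin 7) 1 4 = 0 := by rw [eps_eq]; norm_num [show epsZ 3 1 4 = 0 by decide]
lemma eps_315 : eps (3:Fin 7) 1 5 = -1 := by rw [eps_eq]; norm_num [show epsZ 3 1 5 = -1 by decide]
lemma eps_316 : eps (3:Fin 7) 1 6 = 0 := by rw [eps_eq]; norm_num [show epsZ 3 1 6 = 0 by decide]
lemma eps_320 : eps (3:Fin 7) 2 0 = 0 := by rw [eps_eq]; norm_num [show epsZ 3 2 0 = 0 by decide]
lemma eps_321 : eps (3:Fin 7) 2 1 = 0 := by rw [eps_eq]; norm_num [show epsZ 3 2 1 = 0 by decide]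
lemma eps_322 : eps (3:Fin 7) 2 2 = 0 := by rw [eps_eq]; norm_num [show epsZ 3 2 2 = 0 by decide]
lemma eps_323 : eps (3:Fin 7) 2 3 = 0 := by rw [eps_eq]; norm_num [show epsZ 3 2 3 = 0 by decide]
lemma eps_324 : eps (3:Fin 7) 2 4 = 0 := by rw [eps_eq]; norm_num [show epsZ 3 2 4 = 0 by decide]
lemma eps_325 : eps (3:Fin 7) 2 5 = 0 := by rw [eps_eq]; norm_num [show epsZ 3 2 5 = 0 by decide]
lemma eps_326 : eps (3:Fin 7) 2 6 = -1 := by rw [eps_eq]; norm_num [show epsZ 3 2 6 = -1 by decide]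
lemma eps_330 : eps (3:Fin 7) 3 0 = 0 := by rw [eps_eq]; norm_num [show epsZ 3 3 0 = 0 by decide]
lemma eps_331 : eps (3:Fin 7) 3 1 = 0 := by rw [eps_eq]; norm_num [show epsZ 3 3 1 = 0 by decide]
lemma eps_332 : eps (3:Fin 7) 3 2 = 0 := by rw [eps_eq]; norm_num [show epsZ 3 3 2 = 0 by decide]
lemma eps_333 : eps (3:Fin 7) 3 3 = 0 := by rw [eps_eq]; norm_num [show epsZ 3 3 3 = 0 by decide]
lemma eps_334 : eps (3:Fin 7) 3 4 = 0 := by rw [eps_eq]; norm_num [show epsZ 3 3 4 = 0 by decide]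
lemma eps_335 : eps (3:Fin 7) 3 5 = 0 := by rw [eps_eq]; norm_num [show epsZ 3 3 5 = 0 by decide]
lemma eps_336 : eps (3:Fin 7) 3 6 = 0 := by rw [eps_eq]; norm_num [show epsZ 3 3 6 = 0 by decide]
lemma eps_340 : eps (3:Fin 7) 4 0 = 1 := by rw [eps_eq]; norm_num [show epsZ 3 4 0 = 1 by decide]
lemma eps_341 : eps (3:Fin 7) 4 1 = 0 := by rw [eps_eq]; norm_num [show epsZ 3 4 1 = 0 by decide]
lemma eps_342 : eps (3:Fin 7) 4 2 = 0 := by rw [eps_eq]; norm_num [show epsZ 3 4 2 = 0 by decide]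
lemma eps_343 : eps (3:Fin 7) 4 3 = 0 := by rw [eps_eq]; norm_num [show epsZ 3 4 3 = 0 by decide]
lemma eps_344 : eps (3:Fin 7) 4 4 = 0 := by rw [eps_eq]; norm_num [show epsZ 3 4 4 = 0 by decide]
lemma eps_345 : eps (3:Fin 7) 4 5 = 0 := by rw [eps_eq]; norm_num [show epsZ 3 4 5 = 0 by decide]
lemma eps_346 : eps (3:Fin 7) 4 6 = 0 := by rw [eps_eq]; norm_num [show epsZ 3 4 6 = 0 by decide]
lemma eps_350 : eps (3:Fin 7) 5 0 = 0 := by rw [eps_eq]; norm_num [show epsZ 3 5 0 = 0 by decide]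
lemma eps_351 : eps (3:Fin 7) 5 1 = 1 := by rw [eps_eq]; norm_num [show epsZ 3 5 1 = 1 by decide]
lemma eps_352 : eps (3:Fin 7) 5 2 = 0 := by rw [eps_eq]; norm_num [show epsZ 3 5 2 = 0 by decide]
lemma eps_353 : eps (3:Fin 7) 5 3 = 0 := by rw [eps_eq]; norm_num [show epsZ 3 5 3 = 0 by decide]
lemma eps_354 : eps (3:Fin 7) 5 4 = 0 := by rw [eps_eq]; norm_num [show epsZ 3 5 4 = 0 by decide]
lemma eps_355 : eps (3:Fin 7) 5 5 = 0 := by rw [eps_eq]; norm_num [show epsZ 3 5 5 = 0 by decide]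
lemma eps_356 : eps (3:Fin 7) 5 6 = 0 := by rw [eps_eq]; norm_num [show epsZ 3 5 6 = 0 by decide]
lemma eps_360 : eps (3:Fin 7) 6 0 = 0 := by rw [eps_eq]; norm_num [show epsZ 3 6 0 = 0 by decide]
lemma eps_361 : eps (3:Fin 7) 6 1 = 0 := by rw [eps_eq]; norm_num [show epsZ 3 6 1 = 0 by decide]
lemma eps_362 : eps (3:Fin 7) 6 2 = 1 := by rw [eps_eq]; norm_num [show epsZ 3 6 2 = 1 by decide]
lemma eps_363 : eps (3:Fin 7) 6 3 = 0 := by rw [eps_eq]; norm_num [show epsZ 3 6 3 = 0 by decide]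
lemma eps_364 : eps (3:Fin 7) 6 4 = 0 := by rw [eps_eq]; norm_num [show epsZ 3 6 4 = 0 by decide]
lemma eps_365 : eps (3:Fin 7) 6 5 = 0 := by rw [eps_eq]; norm_num [show epsZ 3 6 5 = 0 by decide]
lemma eps_366 : eps (3:Fin 7) 6 6 = 0 := by rw [eps_eq]; norm_num [show epsZ 3 6 6 = 0 by decide]
lemma eps_400 : eps (4:Fin 7) 0 0 = 0 := by rw [eps_eq]; norm_num [show epsZ 4 0 0 = 0 by decide]
lemma eps_401 : eps (4:Fin 7) 0 1 = 0 := by rw [eps_eq]; norm_num [show epsZ 4 0 1 = 0 by decide]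
lemma eps_402 : eps (4:Fin 7) 0 2 = 0 := by rw [eps_eq]; norm_num [show epsZ 4 0 2 = 0 by decide]
lemma eps_403 : eps (4:Fin 7) 0 3 = 1 := by rw [eps_eq]; norm_num [show epsZ 4 0 3 = 1 by decide]
lemma eps_404 : eps (4:Fin 7) 0 4 = 0 := by rw [eps_eq]; norm_num [show epsZ 4 0 4 = 0 by decide]
lemma eps_405 : eps (4:Fin 7) 0 5 = 0 := by rw [eps_eq]; norm_num [show epsZ 4 0 5 = 0 by decide]
lemma eps_406 : eps (4:Fin 7) 0 6 = 0 := by rw [eps_eq]; norm_num [show epsZ 4 0 6 = 0 by decide]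
lemma eps_410 : eps (4:Fin 7) 1 0 = 0 := by rw [eps_eq]; norm_num [show epsZ 4 1 0 = 0 by decide]
lemma eps_411 : eps (4:Fin 7) 1 1 = 0 := by rw [eps_eq]; norm_num [show epsZ 4 1 1 = 0 by decide]
lemma eps_412 : eps (4:Fin 7) 1 2 = 0 := by rw [eps_eq]; norm_num [show epsZ 4 1 2 = 0 by decide]
lemma eps_413 : eps (4:Fin 7) 1 3 = 0 := by rw [eps_eq]; norm_num [show epsZ 4 1 3 = 0 by decide]
lemma eps_414 : eps (4:Fin 7) 1 4 = 0 := by rw [eps_eq]; norm_num [show epsZ 4 1 4 = 0 by decide]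
lemma eps_415 : eps (4:Fin 7) 1 5 = 0 := by rw [eps_eq]; norm_num [show epsZ 4 1 5 = 0 by decide]
lemma eps_416 : eps (4:Fin 7) 1 6 = -1 := by rw [eps_eq]; norm_num [show epsZ 4 1 6 = -1 by decide]
lemma eps_420 : eps (4:Fin 7) 2 0 = 0 := by rw [eps_eq]; norm_num [show epsZ 4 2 0 = 0 by decide]
lemma eps_421 : eps (4:Fin 7) 2 1 = 0 := by rw [eps_eq]; norm_num [show epsZ 4 2 1 = 0 by decide]
lemma eps_422 : eps (4:Fin 7) 2 2 = 0 := by rw [eps_eq]; norm_num [show epsZ 4 2 2 = 0 by decide]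
lemma eps_423 : eps (4:Fin 7) 2 3 = 0 := by rw [eps_eq]; norm_num [show epsZ 4 2 3 = 0 by decide]
lemma eps_424 : eps (4:Fin 7) 2 4 = 0 := by rw [eps_eq]; norm_num [show epsZ 4 2 4 = 0 by decide]
lemma eps_425 : eps (4:Fin 7) 2 5 = 1 := by rw [eps_eq]; norm_num [show epsZ 4 2 5 = 1 by decide]
lemma eps_426 : eps (4:Fin 7) 2 6 = 0 := by rw [eps_eq]; norm_num [show epsZ 4 2 6 = 0 by decide]
lemma eps_430 : eps (4:Fin 7) 3 0 = -1 := by rw [eps_eq]; norm_num [show epsZ 4 3 0 = -1 by decide]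
lemma eps_431 : eps (4:Fin 7) 3 1 = 0 := by rw [eps_eq]; norm_num [show epsZ 4 3 1 = 0 by decide]
lemma eps_432 : eps (4:Fin 7) 3 2 = 0 := by rw [eps_eq]; norm_num [show epsZ 4 3 2 = 0 by decide]
lemma eps_433 : eps (4:Fin 7) 3 3 = 0 := by rw [eps_eq]; norm_num [show epsZ 4 3 3 = 0 by decide]
lemma eps_434 : eps (4:Fin 7) 3 4 = 0 := by rw [eps_eq]; norm_num [show epsZ 4 3 4 = 0 by decide]
lemma eps_435 : eps (4:Fin 7) 3 5 = 0 := by rw [eps_eq]; norm_num [show epsZ 4 3 5 = 0 by decide]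
lemma eps_436 : eps (4:Fin 7) 3 6 = 0 := by rw [eps_eq]; norm_num [show epsZ 4 3 6 = 0 by decide]
lemma eps_440 : eps (4:Fin 7) 4 0 = 0 := by rw [eps_eq]; norm_num [show epsZ 4 4 0 = 0 by decide]
lemma eps_441 : eps (4:Fin 7) 4 1 = 0 := by rw [eps_eq]; norm_num [show epsZ 4 4 1 = 0 by decide]
lemma eps_442 : eps (4:Fin 7) 4 2 = 0 := by rw [eps_eq]; norm_num [show epsZ 4 4 2 = 0 by decide]
lemma eps_443 : eps (4:Fin 7) 4 3 = 0 := by rw [eps_eq]; norm_num [show epsZ 4 4 3 = 0 by decide]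
lemma eps_444 : eps (4:Fin 7) 4 4 = 0 := by rw [eps_eq]; norm_num [show epsZ 4 4 4 = 0 by decide]
lemma eps_445 : eps (4:Fin 7) 4 5 = 0 := by rw [eps_eq]; norm_num [show epsZ 4 4 5 = 0 by decide]
lemma eps_446 : eps (4:Fin 7) 4 6 = 0 := by rw [eps_eq]; norm_num [show epsZ 4 4 6 = 0 by decide]
lemma eps_450 : eps (4:Fin 7) 5 0 = 0 := by rw [eps_eq]; norm_num [show epsZ 4 5 0 = 0 by decide]
lemma eps_451 : eps (4:Fin 7) 5 1 = 0 := by rw [eps_eq]; norm_num [show epsZ 4 5 1 = 0 by decide]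
lemma eps_452 : eps (4:Fin 7) 5 2 = -1 := by rw [eps_eq]; norm_num [show epsZ 4 5 2 = -1 by decide]
lemma eps_453 : eps (4:Fin 7) 5 3 = 0 := by rw [eps_eq]; norm_num [show epsZ 4 5 3 = 0 by decide]
lemma eps_454 : eps (4:Fin 7) 5 4 = 0 := by rw [eps_eq]; norm_num [show epsZ 4 5 4 = 0 by decide]
lemma eps_455 : eps (4:Fin 7) 5 5 = 0 := by rw [eps_eq]; norm_num [show epsZ 4 5 5 = 0 by decide]
lemma eps_456 : eps (4:Fin 7) 5 6 = 0 := by rw [eps_eq]; norm_num [show epsZ 4 5 6 = 0 by decide]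
lemma eps_460 : eps (4:Fin 7) 6 0 = 0 := by rw [eps_eq]; norm_num [show epsZ 4 6 0 = 0 by decide]
lemma eps_461 : eps (4:Fin 7) 6 1 = 1 := by rw [eps_eq]; norm_num [show epsZ 4 6 1 = 1 by decide]
lemma eps_462 : eps (4:Fin 7) 6 2 = 0 := by rw [eps_eq]; norm_num [show epsZ 4 6 2 = 0 by decide]
lemma eps_463 : eps (4:Fin 7) 6 3 = 0 := by rw [eps_eq]; norm_num [show epsZ 4 6 3 = 0 by decide]
lemma eps_464 : eps (4:Fin 7) 6 4 = 0 := by rw [eps_eq]; norm_num [show epsZ 4 6 4 = 0 by decide]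
lemma eps_465 : eps (4:Fin 7) 6 5 = 0 := by rw [eps_eq]; norm_num [show epsZ 4 6 5 = 0 by decide]
lemma eps_466 : eps (4:Fin 7) 6 6 = 0 := by rw [eps_eq]; norm_num [show epsZ 4 6 6 = 0 by decide]
lemma eps_500 : eps (5:Fin 7) 0 0 = 0 := by rw [eps_eq]; norm_num [show epsZ 5 0 0 = 0 by decide]
lemma eps_501 : eps (5:Fin 7) 0 1 = 0 := by rw [eps_eq]; norm_num [show epsZ 5 0 1 = 0 by decide]
lemma eps_502 : eps (5:Fin 7) 0 2 = 0 := by rw [eps_eq]; norm_num [show epsZ 5 0 2 = 0 by decide]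
lemma eps_503 : eps (5:Fin 7) 0 3 = 0 := by rw [eps_eq]; norm_num [show epsZ 5 0 3 = 0 by decide]
lemma eps_504 : eps (5:Fin 7) 0 4 = 0 := by rw [eps_eq]; norm_num [show epsZ 5 0 4 = 0 by decide]
lemma eps_505 : eps (5:Fin 7) 0 5 = 0 := by rw [eps_eq]; norm_num [show epsZ 5 0 5 = 0 by decide]
lemma eps_506 : eps (5:Fin 7) 0 6 = 1 := by rw [eps_eq]; norm_num [show epsZ 5 0 6 = 1 by decide]
lemma eps_510 : eps (5:Fin 7) 1 0 = 0 := by rw [eps_eq]; norm_num [show epsZ 5 1 0 = 0 by decide]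
lemma eps_511 : eps (5:Fin 7) 1 1 = 0 := by rw [eps_eq]; norm_num [show epsZ 5 1 1 = 0 by decide]
lemma eps_512 : eps (5:Fin 7) 1 2 = 0 := by rw [eps_eq]; norm_num [show epsZ 5 1 2 = 0 by decide]
lemma eps_513 : eps (5:Fin 7) 1 3 = 1 := by rw [eps_eq]; norm_num [show epsZ 5 1 3 = 1 by decide]
lemma eps_514 : eps (5:Fin 7) 1 4 = 0 := by rw [eps_eq]; norm_num [show epsZ 5 1 4 = 0 by decide]
lemma eps_515 : eps (5:Fin 7) 1 5 = 0 := by rw [eps_eq]; norm_num [show epsZ 5 1 5 = 0 by decide]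
lemma eps_516 : eps (5:Fin 7) 1 6 = 0 := by rw [eps_eq]; norm_num [show epsZ 5 1 6 = 0 by decide]
lemma eps_520 : eps (5:Fin 7) 2 0 = 0 := by rw [eps_eq]; norm_num [show epsZ 5 2 0 = 0 by decide]
lemma eps_521 : eps (5:Fin 7) 2 1 = 0 := by rw [eps_eq]; norm_num [show epsZ 5 2 1 = 0 by decide]
lemma eps_522 : eps (5:Fin 7) 2 2 = 0 := by rw [eps_eq]; norm_num [show epsZ 5 2 2 = 0 by decide]
lemma eps_523 : eps (5:Fin 7) 2 3 = 0 := by rw [eps_eq]; norm_num [show epsZ 5 2 3 = 0 by decide]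
lemma eps_524 : eps (5:Fin 7) 2 4 = -1 := by rw [eps_eq]; norm_num [show epsZ 5 2 4 = -1 by decide]
lemma eps_525 : eps (5:Fin 7) 2 5 = 0 := by rw [eps_eq]; norm_num [show epsZ 5 2 5 = 0 by decide]
lemma eps_526 : eps (5:Fin 7) 2 6 = 0 := by rw [eps_eq]; norm_num [show epsZ 5 2 6 = 0 by decide]
lemma eps_530 : eps (5:Fin 7) 3 0 = 0 := by rw [eps_eq]; norm_num [show epsZ 5 3 0 = 0 by decide]
lemma eps_531 : eps (5:Fin 7) 3 1 = -1 := by rw [eps_eq]; norm_num [show epsZ 5 3 1 = -1 by decide]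
lemma eps_532 : eps (5:Fin 7) 3 2 = 0 := by rw [eps_eq]; norm_num [show epsZ 5 3 2 = 0 by decide]
lemma eps_533 : eps (5:Fin 7) 3 3 = 0 := by rw [eps_eq]; norm_num [show epsZ 5 3 3 = 0 by decide]
lemma eps_534 : eps (5:Fin 7) 3 4 = 0 := by rw [eps_eq]; norm_num [show epsZ 5 3 4 = 0 by decide]
lemma eps_535 : eps (5:Fin 7) 3 5 = 0 := by rw [eps_eq]; norm_num [show epsZ 5 3 5 = 0 by decide]
lemma eps_536 : eps (5:Fin 7) 3 6 = 0 := by rw [eps_eq]; norm_num [show epsZ 5 3 6 = 0 by decide]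
lemma eps_540 : eps (5:Fin 7) 4 0 = 0 := by rw [eps_eq]; norm_num [show epsZ 5 4 0 = 0 by decide]
lemma eps_541 : eps (5:Fin 7) 4 1 = 0 := by rw [eps_eq]; norm_num [show epsZ 5 4 1 = 0 by decide]
lemma eps_542 : eps (5:Fin 7) 4 2 = 1 := by rw [eps_eq]; norm_num [show epsZ 5 4 2 = 1 by decide]
lemma eps_543 : eps (5:Fin 7) 4 3 = 0 := by rw [eps_eq]; norm_num [show epsZ 5 4 3 = 0 by decide]
lemma eps_544 : eps (5:Fin 7) 4 4 = 0 := by rw [eps_eq]; norm_num [show epsZ 5 4 4 = 0 by decide]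
lemma eps_545 : eps (5:Fin 7) 4 5 = 0 := by rw [eps_eq]; norm_num [show epsZ 5 4 5 = 0 by decide]
lemma eps_546 : eps (5:Fin 7) 4 6 = 0 := by rw [eps_eq]; norm_num [show epsZ 5 4 6 = 0 by decide]
lemma eps_550 : eps (5:Fin 7) 5 0 = 0 := by rw [eps_eq]; norm_num [show epsZ 5 5 0 = 0 by decide]
lemma eps_551 : eps (5:Fin 7) 5 1 = 0 := by rw [eps_eq]; norm_num [show epsZ 5 5 1 = 0 by decide]
lemma eps_552 : eps (5:Fin 7) 5 2 = 0 := by rw [eps_eq]; norm_num [show epsZ 5 5 2 = 0 by decide]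
lemma eps_553 : eps (5:Fin 7) 5 3 = 0 := by rw [eps_eq]; norm_num [show epsZ 5 5 3 = 0 by decide]
lemma eps_554 : eps (5:Fin 7) 5 4 = 0 := by rw [eps_eq]; norm_num [show epsZ 5 5 4 = 0 by decide]
lemma eps_555 : eps (5:Fin 7) 5 5 = 0 := by rw [eps_eq]; norm_num [show epsZ 5 5 5 = 0 by decide]
lemma eps_556 : eps (5:Fin 7) 5 6 = 0 := by rw [eps_eq]; norm_num [show epsZ 5 5 6 = 0 by decide]
lemma eps_560 : eps (5:Fin 7) 6 0 = -1 := by rw [eps_eq]; norm_num [show epsZ 5 6 0 = -1 by decide]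
lemma eps_561 : eps (5:Fin 7) 6 1 = 0 := by rw [eps_eq]; norm_num [show epsZ 5 6 1 = 0 by decide]
lemma eps_562 : eps (5:Fin 7) 6 2 = 0 := by rw [eps_eq]; norm_num [show epsZ 5 6 2 = 0 by decide]
lemma eps_563 : eps (5:Fin 7) 6 3 = 0 := by rw [eps_eq]; norm_num [show epsZ 5 6 3 = 0 by decide]
lemma eps_564 : eps (5:Fin 7) 6 4 = 0 := by rw [eps_eq]; norm_num [show epsZ 5 6 4 = 0 by decide]
lemma eps_565 : eps (5:Fin 7) 6 5 = 0 := by rw [eps_eq]; norm_num [show epsZ 5 6 5 = 0 by decide]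
lemma eps_566 : eps (5:Fin 7) 6 6 = 0 := by rw [eps_eq]; norm_num [show epsZ 5 6 6 = 0 by decide]
lemma eps_600 : eps (6:Fin 7) 0 0 = 0 := by rw [eps_eq]; norm_num [show epsZ 6 0 0 = 0 by decide]
lemma eps_601 : eps (6:Fin 7) 0 1 = 0 := by rw [eps_eq]; norm_num [show epsZ 6 0 1 = 0 by decide]
lemma eps_602 : eps (6:Fin 7) 0 2 = 0 := by rw [eps_eq]; norm_num [show epsZ 6 0 2 = 0 by decide]
lemma eps_603 : eps (6:Fin 7) 0 3 = 0 := by rw [eps_eq]; norm_num [show epsZ 6 0 3 = 0 by decide]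
lemma eps_604 : eps (6:Fin 7) 0 4 = 0 := by rw [eps_eq]; norm_num [show epsZ 6 0 4 = 0 by decide]
lemma eps_605 : eps (6:Fin 7) 0 5 = -1 := by rw [eps_eq]; norm_num [show epsZ 6 0 5 = -1 by decide]
lemma eps_606 : eps (6:Fin 7) 0 6 = 0 := by rw [eps_eq]; norm_num [show epsZ 6 0 6 = 0 by decide]
lemma eps_610 : eps (6:Fin 7) 1 0 = 0 := by rw [eps_eq]; norm_num [show epsZ 6 1 0 = 0 by decide]
lemma eps_611 : eps (6:Fin 7) 1 1 = 0 := by rw [eps_eq]; norm_num [show epsZ 6 1 1 = 0 by decide]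
lemma eps_612 : eps (6:Fin 7) 1 2 = 0 := by rw [eps_eq]; norm_num [show epsZ 6 1 2 = 0 by decide]
lemma eps_613 : eps (6:Fin 7) 1 3 = 0 := by rw [eps_eq]; norm_num [show epsZ 6 1 3 = 0 by decide]
lemma eps_614 : eps (6:Fin 7) 1 4 = 1 := by rw [eps_eq]; norm_num [show epsZ 6 1 4 = 1 by decide]
lemma eps_615 : eps (6:Fin 7) 1 5 = 0 := by rw [eps_eq]; norm_num [show epsZ 6 1 5 = 0 by decide]
lemma eps_616 : eps (6:Fin 7) 1 6 = 0 := by rw [eps_eq]; norm_num [show epsZ 6 1 6 = 0 by decide]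
lemma eps_620 : eps (6:Fin 7) 2 0 = 0 := by rw [eps_eq]; norm_num [show epsZ 6 2 0 = 0 by decide]
lemma eps_621 : eps (6:Fin 7) 2 1 = 0 := by rw [eps_eq]; norm_num [show epsZ 6 2 1 = 0 by decide]
lemma eps_622 : eps (6:Fin 7) 2 2 = 0 := by rw [eps_eq]; norm_num [show epsZ 6 2 2 = 0 by decide]
lemma eps_623 : eps (6:Fin 7) 2 3 = 1 := by rw [eps_eq]; norm_num [show epsZ 6 2 3 = 1 by decide]
lemma eps_624 : eps (6:Fin 7) 2 4 = 0 := by rw [eps_eq]; norm_num [show epsZ 6 2 4 = 0 by decide]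
lemma eps_625 : eps (6:Fin 7) 2 5 = 0 := by rw [eps_eq]; norm_num [show epsZ 6 2 5 = 0 by decide]
lemma eps_626 : eps (6:Fin 7) 2 6 = 0 := by rw [eps_eq]; norm_num [show epsZ 6 2 6 = 0 by decide]
lemma eps_630 : eps (6:Fin 7) 3 0 = 0 := by rw [eps_eq]; norm_num [show epsZ 6 3 0 = 0 by decide]
lemma eps_631 : eps (6:Fin 7) 3 1 = 0 := by rw [eps_eq]; norm_num [show epsZ 6 3 1 = 0 by decide]
lemma eps_632 : eps (6:Fin 7) 3 2 = -1 := by rw [eps_eq]; norm_num [show epsZ 6 3 2 = -1 by decide]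
lemma eps_633 : eps (6:Fin 7) 3 3 = 0 := by rw [eps_eq]; norm_num [show epsZ 6 3 3 = 0 by decide]
lemma eps_634 : eps (6:Fin 7) 3 4 = 0 := by rw [eps_eq]; norm_num [show epsZ 6 3 4 = 0 by decide]
lemma eps_635 : eps (6:Fin 7) 3 5 = 0 := by rw [eps_eq]; norm_num [show epsZ 6 3 5 = 0 by decide]
lemma eps_636 : eps (6:Fin 7) 3 6 = 0 := by rw [eps_eq]; norm_num [show epsZ 6 3 6 = 0 by decide]
lemma eps_640 : eps (6:Fin 7) 4 0 = 0 := by rw [eps_eq]; norm_num [show epsZ 6 4 0 = 0 by decide]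
lemma eps_641 : eps (6:Fin 7) 4 1 = -1 := by rw [eps_eq]; norm_num [show epsZ 6 4 1 = -1 by decide]
lemma eps_642 : eps (6:Fin 7) 4 2 = 0 := by rw [eps_eq]; norm_num [show epsZ 6 4 2 = 0 by decide]
lemma eps_643 : eps (6:Fin 7) 4 3 = 0 := by rw [eps_eq]; norm_num [show epsZ 6 4 3 = 0 by decide]
lemma eps_644 : eps (6:Fin 7) 4 4 = 0 := by rw [eps_eq]; norm_num [show epsZ 6 4 4 = 0 by decide]
lemma eps_645 : eps (6:Fin 7) 4 5 = 0 := by rw [eps_eq]; norm_num [show epsZ 6 4 5 = 0 by decide]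
lemma eps_646 : eps (6:Fin 7) 4 6 = 0 := by rw [eps_eq]; norm_num [show epsZ 6 4 6 = 0 by decide]
lemma eps_650 : eps (6:Fin 7) 5 0 = 1 := by rw [eps_eq]; norm_num [show epsZ 6 5 0 = 1 by decide]
lemma eps_651 : eps (6:Fin 7) 5 1 = 0 := by rw [eps_eq]; norm_num [show epsZ 6 5 1 = 0 by decide]
lemma eps_652 : eps (6:Fin 7) 5 2 = 0 := by rw [eps_eq]; norm_num [show epsZ 6 5 2 = 0 by decide]
lemma eps_653 : eps (6:Fin 7) 5 3 = 0 := by rw [eps_eq]; norm_num [show epsZ 6 5 3 = 0 by decide]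
lemma eps_654 : eps (6:Fin 7) 5 4 = 0 := by rw [eps_eq]; norm_num [show epsZ 6 5 4 = 0 by decide]
lemma eps_655 : eps (6:Fin 7) 5 5 = 0 := by rw [eps_eq]; norm_num [show epsZ 6 5 5 = 0 by decide]
lemma eps_656 : eps (6:Fin 7) 5 6 = 0 := by rw [eps_eq]; norm_num [show epsZ 6 5 6 = 0 by decide]
lemma eps_660 : eps (6:Fin 7) 6 0 = 0 := by rw [eps_eq]; norm_num [show epsZ 6 6 0 = 0 by decide]
lemma eps_661 : eps (6:Fin 7) 6 1 = 0 := by rw [eps_eq]; norm_num [show epsZ 6 6 1 = 0 by decide]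
lemma eps_662 : eps (6:Fin 7) 6 2 = 0 := by rw [eps_eq]; norm_num [show epsZ 6 6 2 = 0 by decide]
lemma eps_663 : eps (6:Fin 7) 6 3 = 0 := by rw [eps_eq]; norm_num [show epsZ 6 6 3 = 0 by decide]
lemma eps_664 : eps (6:Fin 7) 6 4 = 0 := by rw [eps_eq]; norm_num [show epsZ 6 6 4 = 0 by decide]
lemma eps_665 : eps (6:Fin 7) 6 5 = 0 := by rw [eps_eq]; norm_num [show epsZ 6 6 5 = 0 by decide]
lemma eps_666 : eps (6:Fin 7) 6 6 = 0 := by rw [eps_eq]; norm_num [show epsZ 6 6 6 = 0 by decide]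

lemma cross_app0 (u v : Fin 7 → ℝ) : cross u v 0 = u 1*v 2 -  u 2*v 1 + u 3*v 4 -  u 4*v 3 -  u 5*v 6 + u 6*v 5 := by
  simp only [cross, Fin.sum_univ_seven]
  simp only [eps_000, eps_001, eps_002, eps_003, eps_004, eps_005, eps_006, eps_010, eps_011, eps_012, eps_013, eps_014, eps_015, eps_016, eps_020, eps_021, eps_022, eps_023, eps_024, eps_025, eps_026, eps_030, eps_031, eps_032, eps_033, eps_034, eps_035, eps_036, eps_040, eps_041, eps_042, eps_043, eps_044, eps_045, eps_046, eps_050, eps_051, eps_052, eps_053, eps_054, eps_055, eps_056, eps_060, eps_061, eps_062, eps_063, eps_064, eps_065, eps_066]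
  ring

lemma cross_app1 (u v : Fin 7 → ℝ) : cross u v 1 = - u 0*v 2 + u 2*v 0 + u 3*v 5 + u 4*v 6 -  u 5*v 3 -  u 6*v 4 := by
  simp only [cross, Fin.sum_univ_seven]
  simp only [eps_100, eps_101, eps_102, eps_103, eps_104, eps_105, eps_106, eps_110, eps_111, eps_112, eps_113, eps_114, eps_115, eps_116, eps_120, eps_121, eps_122, eps_123, eps_124, eps_125, eps_126, eps_130, eps_131, eps_132, eps_133, eps_134, eps_135, eps_136, eps_140, eps_141, eps_142, eps_143, eps_144, eps_145, eps_146, eps_150, eps_151, eps_152, eps_153, eps_154, eps_155, eps_156, eps_160, eps_161, eps_162, eps_163, eps_164, eps_165, eps_166]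
  ring

lemma cross_app2 (u v : Fin 7 → ℝ) : cross u v 2 = u 0*v 1 -  u 1*v 0 + u 3*v 6 -  u 4*v 5 + u 5*v 4 -  u 6*v 3 := by
  simp only [cross, Fin.sum_univ_seven]
  simp only [eps_200, eps_201, eps_202, eps_203, eps_204, eps_205, eps_206, eps_210, eps_211, eps_212, eps_213, eps_214, eps_215, eps_216, eps_220, eps_221, eps_222, eps_223, eps_224, eps_225, eps_226, eps_230, eps_231, eps_232, eps_233, eps_234, eps_235, eps_236, eps_240, eps_241, eps_242, eps_243, eps_244, eps_245, eps_246, eps_250, eps_251, eps_252, eps_253, eps_254, eps_255, eps_256, eps_260, eps_261, eps_262, eps_263, eps_264, eps_265, eps_266]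
  ring

lemma cross_app3 (u v : Fin 7 → ℝ) : cross u v 3 = - u 0*v 4 -  u 1*v 5 -  u 2*v 6 + u 4*v 0 + u 5*v 1 + u 6*v 2 := by
  simp only [cross, Fin.sum_univ_seven]
  simp only [eps_300, eps_301, eps_302, eps_303, eps_304, eps_305, eps_306, eps_310, eps_311, eps_312, eps_313, eps_314, eps_315, eps_316, eps_320, eps_321, eps_322, eps_323, eps_324, eps_325, eps_326, eps_330, eps_331, eps_332, eps_333, eps_334, eps_335, eps_336, eps_340, eps_341, eps_342, eps_343, eps_344, eps_345, eps_346, eps_350, eps_351, eps_352, eps_353, eps_354, eps_355, eps_356, eps_360, eps_361, eps_362, eps_363, eps_364, eps_365, eps_366]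
  ring

lemma cross_app4 (u v : Fin 7 → ℝ) : cross u v 4 = u 0*v 3 -  u 1*v 6 + u 2*v 5 -  u 3*v 0 -  u 5*v 2 + u 6*v 1 := by
  simp only [cross, Fin.sum_univ_seven]
  simp only [eps_400, eps_401, eps_402, eps_403, eps_404, eps_405, eps_406, eps_410, eps_411, eps_412, eps_413, eps_414, eps_415, eps_416, eps_420, eps_421, eps_422, eps_423, eps_424, eps_425, eps_426, eps_430, eps_431, eps_432, eps_433, eps_434, eps_435, eps_436, eps_440, eps_441, eps_442, eps_443, eps_444, eps_445, eps_446, eps_450, eps_451, eps_452, eps_453, eps_454, eps_455, eps_456, eps_460, eps_461, eps_462, eps_463, eps_464, eps_465, eps_466]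
  ring

lemma cross_app5 (u v : Fin 7 → ℝ) : cross u v 5 = u 0*v 6 + u 1*v 3 -  u 2*v 4 -  u 3*v 1 + u 4*v 2 -  u 6*v 0 := by
  simp only [cross, Fin.sum_univ_seven]
  simp only [eps_500, eps_501, eps_502, eps_503, eps_504, eps_505, eps_506, eps_510, eps_511, eps_512, eps_513, eps_514, eps_515, eps_516, eps_520, eps_521, eps_522, eps_523, eps_524, eps_525, eps_526, eps_530, eps_531, eps_532, eps_533, eps_534, eps_535, eps_536, eps_540, eps_541, eps_542, eps_543, eps_544, eps_545, eps_546, eps_550, eps_551, eps_552, eps_553, eps_554, eps_555, eps_556, eps_560, eps_561, eps_562, eps_563, eps_564, eps_565, eps_566]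
  ring

lemma cross_app6 (u v : Fin 7 → ℝ) : cross u v 6 = - u 0*v 5 + u 1*v 4 + u 2*v 3 -  u 3*v 2 -  u 4*v 1 + u 5*v 0 := by
  simp only [cross, Fin.sum_univ_seven]
  simp only [eps_600, eps_601, eps_602, eps_603, eps_604, eps_605, eps_606, eps_610, eps_611, eps_612, eps_613, eps_614, eps_615, eps_616, eps_620, eps_621, eps_622, eps_623, eps_624, eps_625, eps_626, eps_630, eps_631, eps_632, eps_633, eps_634, eps_635, eps_636, eps_640, eps_641, eps_642, eps_643, eps_644, eps_645, eps_646, eps_650, eps_651, eps_652, eps_653, eps_654, eps_655, eps_656, eps_660, eps_661, eps_662, eps_663, eps_664, eps_665, eps_666]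
  ring


lemma dot_cross_left (p q : Fin 7 → ℝ) : dot p (cross p q) = 0 := by
  simp only [dot, Fin.sum_univ_seven, cross_app0, cross_app1, cross_app2, cross_app3,
    cross_app4, cross_app5, cross_app6]
  ring

lemma dot_cross_right (p q : Fin 7 → ℝ) : dot q (cross p q) = 0 := by
  simp only [dot, Fin.sum_univ_seven, cross_app0, cross_app1, cross_app2, cross_app3,
    cross_app4, cross_app5, cross_app6]
  ring

lemma dot_cross_cross (p q : Fin 7 → ℝ) :
    dot (cross p q) (cross p q) = dot p p * dot q q - dot p q ^ 2 := by
  simp only [dot, Fin.sum_univ_seven, cross_app0, cross_app1, cross_app2, cross_app3,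
    cross_app4, cross_app5, cross_app6]
  ring

lemma dot_comb (s a b : ℝ) (p q c : Fin 7 → ℝ) :
    dot (s • (a • q + b • p - c)) (s • (a • q + b • p - c)) =
      s ^ 2 * (a ^ 2 * dot q q + b ^ 2 * dot p p + 2 * (a * b) * dot p q
        - 2 * a * dot q c - 2 * b * dot p c + dot c c) := by
  simp only [dot, Fin.sum_univ_seven, Pi.smul_apply, Pi.add_apply, Pi.sub_apply, smul_eq_mul]
  ring

/-- for `p, q` in the closed unit ball of ℝ⁷ one has
`1 - |p⊛q|² = c(p,q)²`; in particular `|p⊛q| ≤ 1`, so the vector star product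
maps the closed unit ball to itself. -/
theorem vstar_unit_ball (p q : Fin 7 → ℝ) (hp : dot p p ≤ 1) (hq : dot q q ≤ 1) :
    1 - dot (vstar p q) (vstar p q) = (cfun p q) ^ 2 ∧
    dot (vstar p q) (vstar p q) ≤ 1 := by
  set a := Real.sqrt (1 - dot p p) with ha
  set b := Real.sqrt (1 - dot q q) with hb
  have ha2 : a ^ 2 = 1 - dot p p := Real.sq_sqrt (by linarith)
  have hb2 : b ^ 2 = 1 - dot q q := Real.sq_sqrt (by linarith)
  have hs : sgn p q ^ 2 = 1 := by unfold sgn; split_ifs <;> norm_num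
  have hv : dot (vstar p q) (vstar p q) =
      sgn p q ^ 2 * (a ^ 2 * dot q q + b ^ 2 * dot p p + 2 * (a * b) * dot p q
        - 2 * a * dot q (cross p q) - 2 * b * dot p (cross p q)
        + dot (cross p q) (cross p q)) := by
    rw [vstar, dot_comb]
  have key : 1 - dot (vstar p q) (vstar p q) = (cfun p q) ^ 2 := by
    rw [hv, hs, dot_cross_left, dot_cross_right, dot_cross_cross, cfun]
    rw [← ha, ← hb]
    ring_nf
    nlinarith [ha2, hb2]
  refine ⟨key, ?_⟩
  nlinarith [sq_nonneg (cfun p q), key]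
end

section
/- Let p₁,p₂,p₃ ∈ ℝ⁷ with |p₁| ≤ 1, |p₂| ≤ 1, |p₃| ≤ 1, and suppose c(p₁,p₂) ≠ 0, c(p₂,p₃) ≠ 0, c(p₁⊛p₂,p₃) ≠ 0 and c(p₁,p₂⊛p₃) ≠ 0. Then the associator of the vector star product equals (p₁⊛p₂)⊛p₃ − p₁⊛(p₂⊛p₃) = ε(p₁,p₂)·ε(p₁⊛p₂,p₃)·[ (p₁×p₂)×p₃ − (p₁·p₂) p₃ − p₁×(p₂×p₃) + (p₂·p₃) p₁ ]. -/
open Finset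

section Aux

lemma cross_apply0 (u v : Fin 7 → ℝ) : cross u v 0 =
    u 1 * v 2 - u 2 * v 1 + u 3 * v 4 - u 4 * v 3 + u 6 * v 5 - u 5 * v 6 := by
  simp only [cross, Fin.sum_univ_seven]
  simp (config := { decide := true }) only [eps, if_true, if_false]
  ring

lemma cross_apply1 (u v : Fin 7 → ℝ) : cross u v 1 =
    u 2 * v 0 - u 0 * v 2 + u 3 * v 5 - u 5 * v 3 + u 4 * v 6 - u 6 * v 4 := by
  simp only [cross, Fin.sum_univ_seven]
  simp (config := { decide := true }) only [eps, if_true, if_false]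
  ring

lemma cross_apply2 (u v : Fin 7 → ℝ) : cross u v 2 =
    u 0 * v 1 - u 1 * v 0 + u 3 * v 6 - u 6 * v 3 + u 5 * v 4 - u 4 * v 5 := by
  simp only [cross, Fin.sum_univ_seven]
  simp (config := { decide := true }) only [eps, if_true, if_false]
  ring

lemma cross_apply3 (u v : Fin 7 → ℝ) : cross u v 3 =
    u 4 * v 0 - u 0 * v 4 + u 5 * v 1 - u 1 * v 5 + u 6 * v 2 - u 2 * v 6 := by
  simp only [cross, Fin.sum_univ_seven]
  simp (config := { decide := true }) only [eps, if_true, if_false]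
  ring

lemma cross_apply4 (u v : Fin 7 → ℝ) : cross u v 4 =
    u 0 * v 3 - u 3 * v 0 + u 6 * v 1 - u 1 * v 6 + u 2 * v 5 - u 5 * v 2 := by
  simp only [cross, Fin.sum_univ_seven]
  simp (config := { decide := true }) only [eps, if_true, if_false]
  ring

lemma cross_apply5 (u v : Fin 7 → ℝ) : cross u v 5 =
    u 0 * v 6 - u 6 * v 0 + u 1 * v 3 - u 3 * v 1 + u 4 * v 2 - u 2 * v 4 := by
  simp only [cross, Fin.sum_univ_seven]
  simp (config := { decide := true }) only [eps, if_true, if_false]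
  ring

lemma cross_apply6 (u v : Fin 7 → ℝ) : cross u v 6 =
    u 5 * v 0 - u 0 * v 5 + u 1 * v 4 - u 4 * v 1 + u 2 * v 3 - u 3 * v 2 := by
  simp only [cross, Fin.sum_univ_seven]
  simp (config := { decide := true }) only [eps, if_true, if_false]
  ring

end Aux

section Aux2

open Finset in
lemma cross_smul_left' (s : ℝ) (u v : Fin 7 → ℝ) : cross (s • u) v = s • cross u v := by
  funext i
  simp only [cross, Pi.smul_apply, smul_eq_mul, Finset.mul_sum]
  exact Finset.sum_congr rfl fun j _ => Finset.sum_congr rfl fun k _ => by ring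

open Finset in
lemma cross_smul_right' (s : ℝ) (u v : Fin 7 → ℝ) : cross u (s • v) = s • cross u v := by
  funext i
  simp only [cross, Pi.smul_apply, smul_eq_mul, Finset.mul_sum]
  exact Finset.sum_congr rfl fun j _ => Finset.sum_congr rfl fun k _ => by ring

lemma cross_add_left' (u v w : Fin 7 → ℝ) : cross (u + v) w = cross u w + cross v w := by
  funext i
  simp only [cross, Pi.add_apply]
  rw [← Finset.sum_add_distrib]
  exact Finset.sum_congr rfl fun j _ => by
    rw [← Finset.sum_add_distrib]
    exact Finset.sum_congr rfl fun k _ => by ring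

lemma cross_add_right' (u v w : Fin 7 → ℝ) : cross u (v + w) = cross u v + cross u w := by
  funext i
  simp only [cross, Pi.add_apply]
  rw [← Finset.sum_add_distrib]
  exact Finset.sum_congr rfl fun j _ => by
    rw [← Finset.sum_add_distrib]
    exact Finset.sum_congr rfl fun k _ => by ring

lemma cross_sub_left' (u v w : Fin 7 → ℝ) : cross (u - v) w = cross u w - cross v w := by
  funext i
  simp only [cross, Pi.sub_apply]
  rw [← Finset.sum_sub_distrib]
  exact Finset.sum_congr rfl fun j _ => by
    rw [← Finset.sum_sub_distrib]
    exact Finset.sum_congr rfl fun k _ => by ring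

lemma cross_sub_right' (u v w : Fin 7 → ℝ) : cross u (v - w) = cross u v - cross u w := by
  funext i
  simp only [cross, Pi.sub_apply]
  rw [← Finset.sum_sub_distrib]
  exact Finset.sum_congr rfl fun j _ => by
    rw [← Finset.sum_sub_distrib]
    exact Finset.sum_congr rfl fun k _ => by ring

lemma dot_smul_left' (s : ℝ) (u v : Fin 7 → ℝ) : dot (s • u) v = s * dot u v := by
  simp only [dot, Fin.sum_univ_seven, Pi.smul_apply, smul_eq_mul]; ring

lemma dot_smul_right' (s : ℝ) (u v : Fin 7 → ℝ) : dot u (s • v) = s * dot u v := by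
  simp only [dot, Fin.sum_univ_seven, Pi.smul_apply, smul_eq_mul]; ring

lemma dot_vv_expand (p q : Fin 7 → ℝ) (a b : ℝ) :
    dot (a • q + b • p - cross p q) (a • q + b • p - cross p q) =
      a^2 * dot q q + b^2 * dot p p + 2*a*b*dot p q + dot p p * dot q q - dot p q^2 := by
  simp only [dot, Fin.sum_univ_seven, Pi.add_apply, Pi.sub_apply, Pi.smul_apply, smul_eq_mul,
    cross_apply0, cross_apply1, cross_apply2, cross_apply3, cross_apply4, cross_apply5,
    cross_apply6]
  ring

lemma dot_vv (p q : Fin 7 → ℝ) (a b : ℝ) (ha : a^2 = 1 - dot p p) (hb : b^2 = 1 - dot q q) :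
    dot (a • q + b • p - cross p q) (a • q + b • p - cross p q) = 1 - (a * b - dot p q)^2 := by
  rw [dot_vv_expand]
  linear_combination (dot q q + b^2) * ha + hb

lemma key_scalar (p₁ p₂ p₃ : Fin 7 → ℝ) (a b c : ℝ) :
    (a*b - dot p₁ p₂) * c - dot (a • p₂ + b • p₁ - cross p₁ p₂) p₃ =
      a * (b*c - dot p₂ p₃) - dot p₁ (b • p₃ + c • p₂ - cross p₂ p₃) := by
  simp only [dot, Fin.sum_univ_seven, Pi.add_apply, Pi.sub_apply, Pi.smul_apply, smul_eq_mul,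
    cross_apply0, cross_apply1, cross_apply2, cross_apply3, cross_apply4, cross_apply5,
    cross_apply6]
  ring

lemma key_vec (p₁ p₂ p₃ : Fin 7 → ℝ) (a b c : ℝ) :
    ((a*b - dot p₁ p₂) • p₃ + c • (a • p₂ + b • p₁ - cross p₁ p₂) -
        cross (a • p₂ + b • p₁ - cross p₁ p₂) p₃) -
      ((b*c - dot p₂ p₃) • p₁ + a • (b • p₃ + c • p₂ - cross p₂ p₃) -
        cross p₁ (b • p₃ + c • p₂ - cross p₂ p₃)) =
      cross (cross p₁ p₂) p₃ - dot p₁ p₂ • p₃ - cross p₁ (cross p₂ p₃) + dot p₂ p₃ • p₁ := by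
  rw [cross_sub_left', cross_add_left', cross_smul_left', cross_smul_left',
    cross_sub_right', cross_add_right', cross_smul_right', cross_smul_right']
  funext i
  simp only [Pi.add_apply, Pi.sub_apply, Pi.smul_apply, smul_eq_mul]
  ring

lemma sgn_cases (p q : Fin 7 → ℝ) : sgn p q = 1 ∨ sgn p q = -1 := by
  unfold sgn; split_ifs <;> simp

lemma sgn_mul_self (p q : Fin 7 → ℝ) : sgn p q * sgn p q = 1 := by
  unfold sgn; split_ifs <;> norm_num

lemma sgn_mul_cfun (p q : Fin 7 → ℝ) : sgn p q * cfun p q = |cfun p q| := by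
  unfold sgn; split_ifs with h
  · rw [one_mul, abs_of_nonneg h]
  · rw [abs_of_neg (lt_of_not_ge h)]; ring

lemma sign_combine {s e S : ℝ} (hs : s = 1 ∨ s = -1)
    (he : e = if 0 ≤ s * S then 1 else -1) (hS : S ≠ 0) :
    s * e = if 0 ≤ S then 1 else -1 := by
  rcases hs with h | h <;> subst h
  · simpa using he
  · by_cases hpos : 0 ≤ S
    · have hneg : ¬ (0 ≤ (-1 : ℝ) * S) := by
        intro hh
        exact hS (le_antisymm (by linarith) hpos)
      rw [if_neg hneg] at he
      rw [he, if_pos hpos]; ring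
    · have hpos' : 0 ≤ (-1 : ℝ) * S := by push_neg at hpos; linarith
      rw [if_pos hpos'] at he
      rw [he, if_neg hpos]; ring

lemma vstar_eq (p q : Fin 7 → ℝ) : vstar p q =
    sgn p q • (Real.sqrt (1 - dot p p) • q + Real.sqrt (1 - dot q q) • p - cross p q) := rfl

lemma cfun_eq (p q : Fin 7 → ℝ) :
    cfun p q = Real.sqrt (1 - dot p p) * Real.sqrt (1 - dot q q) - dot p q := rfl

lemma sgn_eq_ite (p q : Fin 7 → ℝ) : sgn p q = if 0 ≤ cfun p q then 1 else -1 := rfl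

end Aux2

/-- the associator of the vector star product equals
`(p₁⊛p₂)⊛p₃ - p₁⊛(p₂⊛p₃)
  = ε(p₁,p₂)·ε(p₁⊛p₂,p₃)·[(p₁×p₂)×p₃ - (p₁·p₂) p₃ - p₁×(p₂×p₃) + (p₂·p₃) p₁]`. -/
theorem vstar_associator (p₁ p₂ p₃ : Fin 7 → ℝ)
    (h₁ : dot p₁ p₁ ≤ 1) (h₂ : dot p₂ p₂ ≤ 1) (h₃ : dot p₃ p₃ ≤ 1)
    (hc₁₂ : cfun p₁ p₂ ≠ 0) (hc₂₃ : cfun p₂ p₃ ≠ 0)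
    (hcL : cfun (vstar p₁ p₂) p₃ ≠ 0) (hcR : cfun p₁ (vstar p₂ p₃) ≠ 0) :
    vstar (vstar p₁ p₂) p₃ - vstar p₁ (vstar p₂ p₃) =
      (sgn p₁ p₂ * sgn (vstar p₁ p₂) p₃) •
        (cross (cross p₁ p₂) p₃ - dot p₁ p₂ • p₃ -
          cross p₁ (cross p₂ p₃) + dot p₂ p₃ • p₁) := by
  have ha2 : Real.sqrt (1 - dot p₁ p₁) ^ 2 = 1 - dot p₁ p₁ := Real.sq_sqrt (by linarith)
  have hb2 : Real.sqrt (1 - dot p₂ p₂) ^ 2 = 1 - dot p₂ p₂ := Real.sq_sqrt (by linarith)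
  have hc2 : Real.sqrt (1 - dot p₃ p₃) ^ 2 = 1 - dot p₃ p₃ := Real.sq_sqrt (by linarith)
  -- norms of the star products
  have hdq : dot (vstar p₁ p₂) (vstar p₁ p₂) = 1 - cfun p₁ p₂ ^ 2 := by
    rw [vstar_eq, dot_smul_left', dot_smul_right', ← mul_assoc, sgn_mul_self, one_mul,
      cfun_eq]
    exact dot_vv p₁ p₂ _ _ ha2 hb2
  have hdr : dot (vstar p₂ p₃) (vstar p₂ p₃) = 1 - cfun p₂ p₃ ^ 2 := by
    rw [vstar_eq, dot_smul_left', dot_smul_right', ← mul_assoc, sgn_mul_self, one_mul,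
      cfun_eq]
    exact dot_vv p₂ p₃ _ _ hb2 hc2
  have hsqL : Real.sqrt (1 - dot (vstar p₁ p₂) (vstar p₁ p₂)) = sgn p₁ p₂ * cfun p₁ p₂ := by
    rw [hdq, show (1:ℝ) - (1 - cfun p₁ p₂ ^ 2) = cfun p₁ p₂ ^ 2 by ring,
      Real.sqrt_sq_eq_abs, ← sgn_mul_cfun]
  have hsqR : Real.sqrt (1 - dot (vstar p₂ p₃) (vstar p₂ p₃)) = sgn p₂ p₃ * cfun p₂ p₃ := by
    rw [hdr, show (1:ℝ) - (1 - cfun p₂ p₃ ^ 2) = cfun p₂ p₃ ^ 2 by ring,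
      Real.sqrt_sq_eq_abs, ← sgn_mul_cfun]
  -- the two intermediate scalars
  have hcfL : cfun (vstar p₁ p₂) p₃ = sgn p₁ p₂ *
      (cfun p₁ p₂ * Real.sqrt (1 - dot p₃ p₃) -
        dot (Real.sqrt (1 - dot p₁ p₁) • p₂ + Real.sqrt (1 - dot p₂ p₂) • p₁ - cross p₁ p₂)
          p₃) := by
    rw [cfun_eq (vstar p₁ p₂) p₃, hsqL, vstar_eq p₁ p₂, dot_smul_left']; ring
  have hcfR : cfun p₁ (vstar p₂ p₃) = sgn p₂ p₃ *
      (Real.sqrt (1 - dot p₁ p₁) * cfun p₂ p₃ -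
        dot p₁ (Real.sqrt (1 - dot p₂ p₂) • p₃ + Real.sqrt (1 - dot p₃ p₃) • p₂ -
          cross p₂ p₃)) := by
    rw [cfun_eq p₁ (vstar p₂ p₃), hsqR, vstar_eq p₂ p₃, dot_smul_right']; ring
  have hST : cfun p₁ p₂ * Real.sqrt (1 - dot p₃ p₃) -
      dot (Real.sqrt (1 - dot p₁ p₁) • p₂ + Real.sqrt (1 - dot p₂ p₂) • p₁ - cross p₁ p₂) p₃ =
      Real.sqrt (1 - dot p₁ p₁) * cfun p₂ p₃ -
      dot p₁ (Real.sqrt (1 - dot p₂ p₂) • p₃ + Real.sqrt (1 - dot p₃ p₃) • p₂ -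
        cross p₂ p₃) := by
    rw [cfun_eq p₁ p₂, cfun_eq p₂ p₃]
    exact key_scalar p₁ p₂ p₃ _ _ _
  have hS0 : cfun p₁ p₂ * Real.sqrt (1 - dot p₃ p₃) -
      dot (Real.sqrt (1 - dot p₁ p₁) • p₂ + Real.sqrt (1 - dot p₂ p₂) • p₁ - cross p₁ p₂) p₃
      ≠ 0 := by
    intro h
    exact hcL (by rw [hcfL, h, mul_zero])
  have hT0 : Real.sqrt (1 - dot p₁ p₁) * cfun p₂ p₃ -
      dot p₁ (Real.sqrt (1 - dot p₂ p₂) • p₃ + Real.sqrt (1 - dot p₃ p₃) • p₂ - cross p₂ p₃)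
      ≠ 0 := by rw [← hST]; exact hS0
  have heL : sgn (vstar p₁ p₂) p₃ = if 0 ≤ sgn p₁ p₂ *
      (cfun p₁ p₂ * Real.sqrt (1 - dot p₃ p₃) -
        dot (Real.sqrt (1 - dot p₁ p₁) • p₂ + Real.sqrt (1 - dot p₂ p₂) • p₁ - cross p₁ p₂)
          p₃) then 1 else -1 := by
    rw [sgn_eq_ite, hcfL]
  have heR : sgn p₁ (vstar p₂ p₃) = if 0 ≤ sgn p₂ p₃ *
      (Real.sqrt (1 - dot p₁ p₁) * cfun p₂ p₃ -
        dot p₁ (Real.sqrt (1 - dot p₂ p₂) • p₃ + Real.sqrt (1 - dot p₃ p₃) • p₂ -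
          cross p₂ p₃)) then 1 else -1 := by
    rw [sgn_eq_ite, hcfR]
  have hσL := sign_combine (sgn_cases p₁ p₂) heL hS0
  have hσR := sign_combine (sgn_cases p₂ p₃) heR hT0
  have hσ : sgn p₂ p₃ * sgn p₁ (vstar p₂ p₃) = sgn p₁ p₂ * sgn (vstar p₁ p₂) p₃ := by
    rw [hσL, hσR, hST]
  -- expand the two star products
  have hL : vstar (vstar p₁ p₂) p₃ = (sgn p₁ p₂ * sgn (vstar p₁ p₂) p₃) •
      (cfun p₁ p₂ • p₃ + Real.sqrt (1 - dot p₃ p₃) •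
          (Real.sqrt (1 - dot p₁ p₁) • p₂ + Real.sqrt (1 - dot p₂ p₂) • p₁ - cross p₁ p₂) -
        cross (Real.sqrt (1 - dot p₁ p₁) • p₂ + Real.sqrt (1 - dot p₂ p₂) • p₁ -
          cross p₁ p₂) p₃) := by
    rw [vstar_eq (vstar p₁ p₂) p₃, hsqL]
    rw [vstar_eq p₁ p₂, cross_smul_left']
    funext i
    simp only [Pi.add_apply, Pi.sub_apply, Pi.smul_apply, smul_eq_mul]
    ring
  have hR : vstar p₁ (vstar p₂ p₃) = (sgn p₂ p₃ * sgn p₁ (vstar p₂ p₃)) •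
      (cfun p₂ p₃ • p₁ + Real.sqrt (1 - dot p₁ p₁) •
          (Real.sqrt (1 - dot p₂ p₂) • p₃ + Real.sqrt (1 - dot p₃ p₃) • p₂ - cross p₂ p₃) -
        cross p₁ (Real.sqrt (1 - dot p₂ p₂) • p₃ + Real.sqrt (1 - dot p₃ p₃) • p₂ -
          cross p₂ p₃)) := by
    rw [vstar_eq p₁ (vstar p₂ p₃), hsqR]
    rw [vstar_eq p₂ p₃, cross_smul_right']
    funext i
    simp only [Pi.add_apply, Pi.sub_apply, Pi.smul_apply, smul_eq_mul]
    ring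
  rw [hL, hR, hσ, ← smul_sub]
  congr 1
  have hk := key_vec p₁ p₂ p₃ (Real.sqrt (1 - dot p₁ p₁)) (Real.sqrt (1 - dot p₂ p₂))
    (Real.sqrt (1 - dot p₃ p₃))
  rw [cfun_eq p₁ p₂, cfun_eq p₂ p₃]
  exact hk
end

section
/- Let M be a (not necessarily associative) algebra over ℝ with bilinear multiplication ⋆ whose associator A(f,g,h) = f⋆(g⋆h) − (f⋆g)⋆h is totally antisymmetric, and let τ : M → ℝ be a linear functional satisfying the closedness condition τ(f⋆g) = τ(g⋆f) for all f,g ∈ M. Then the integrated associator vanishes: τ((f⋆g)⋆h) = τ(f⋆(g⋆h)) for all f,g,h ∈ M. -/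
/-- For an ℝ-algebra with a totally antisymmetric associator and a
closed linear functional `τ` (i.e. `τ(f⋆g) = τ(g⋆f)`), the integrated associator
vanishes: `τ((f⋆g)⋆h) = τ(f⋆(g⋆h))`. -/
theorem integrated_associator_vanishes {M : Type*} [AddCommGroup M] [Module ℝ M]
    (mul : M →ₗ[ℝ] M →ₗ[ℝ] M)
    (A : M → M → M → M)
    (hA : ∀ f g h : M, A f g h = mul f (mul g h) - mul (mul f g) h)
    (hanti1 : ∀ f g h : M, A f g h = -A g f h)
    (hanti2 : ∀ f g h : M, A f g h = -A f h g)
    (τ : M →ₗ[ℝ] ℝ)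
    (hclosed : ∀ f g : M, τ (mul f g) = τ (mul g f)) :
    ∀ f g h : M, τ (mul (mul f g) h) = τ (mul f (mul g h)) := by
  intro f g h
  have cyc : ∀ a b c : M, A a b c = A b c a := fun a b c => by
    rw [hanti1 a b c, hanti2 b a c, neg_neg]
  have sum0 : τ (A f g h) + τ (A g h f) + τ (A h f g) = 0 := by
    simp only [hA, map_sub]
    rw [hclosed f (mul g h), hclosed g (mul h f), hclosed h (mul f g)]
    ring
  rw [cyc h f g, ← cyc f g h] at sum0
  have hzero : τ (A f g h) = 0 := by linarith
  rw [hA, map_sub] at hzero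
  linarith
end
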